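/- arXiv:0902.0760 — 8 statements merged into one kernel-verified Lean document; each statement's English description precedes it below -/
import Mathlib

section
/- Let j₁, j₂ ∈ ℂ[z] be coprime polynomials with N := deg j₁ > deg j₂ =: M and N ≥ 1, and suppose that j = j₁/j₂ is unramified outside {0,1,∞}, i.e. every complex root of j₁′j₂ − j₁j₂′ is a root of j₁·j₂·(j₁ − j₂). Then the number of distinct complex roots of the polynomial j₁·j₂·(j₁ − j₂) equals N + 1. -/
open Polynomial

private lemma coprime_not_both_root {p q : Polynomial ℂ} (h : IsCoprime p q) {z : ℂ}
    (hp : p.IsRoot z) : ¬ q.IsRoot z := by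
  intro hq
  obtain ⟨a, b, hab⟩ := h
  have := congrArg (eval z) hab
  simp [hp.eq_zero, hq.eq_zero] at this

private lemma rootMult_neg (f : Polynomial ℂ) (z : ℂ) :
    rootMultiplicity z (-f) = rootMultiplicity z f := by
  classical
  rw [← count_roots, ← count_roots, roots_neg]

/-- Key Wronskian lemma: if `p(z) = 0`, `q(z) ≠ 0`, then the multiplicity of `z` in the
Wronskian `p'q - pq'` is one less than its multiplicity in `p`. -/
private lemma wronskian_rootMult {p q : Polynomial ℂ} {z : ℂ} (hp : p ≠ 0)
    (hpz : p.IsRoot z) (hqz : ¬ q.IsRoot z) :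
    rootMultiplicity z (derivative p * q - p * derivative q) + 1 = rootMultiplicity z p := by
  classical
  set m := rootMultiplicity z p with hm
  obtain ⟨k, hk⟩ : ∃ k, m = k + 1 :=
    ⟨m - 1, (Nat.succ_pred_eq_of_pos ((rootMultiplicity_pos hp).2 hpz)).symm⟩
  set u := p /ₘ (X - C z) ^ m with hu_def
  have hu : (X - C z) ^ m * u = p := pow_mul_divByMonic_rootMultiplicity_eq p z
  have huz : u.eval z ≠ 0 := eval_divByMonic_pow_rootMultiplicity_ne_zero z hp
  set v := C ((k : ℂ) + 1) * (u * q) + (X - C z) * (derivative u * q - u * derivative q) with hv_def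
  have hfac : derivative p * q - p * derivative q = (X - C z) ^ k * v := by
    rw [← hu, hk, hv_def]
    rw [derivative_mul, derivative_pow, derivative_X_sub_C]
    simp only [Nat.add_sub_cancel, Nat.cast_add, Nat.cast_one]
    ring
  have hvz : v.eval z ≠ 0 := by
    have : v.eval z = ((k : ℂ) + 1) * (u.eval z * q.eval z) := by
      simp [hv_def]
    rw [this]
    exact mul_ne_zero (Nat.cast_add_one_ne_zero k) (mul_ne_zero huz hqz)
  have hvne : v ≠ 0 := fun h => hvz (by simp [h])
  rw [hfac, rootMultiplicity_mul (mul_ne_zero (pow_ne_zero _ (X_sub_C_ne_zero z)) hvne),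
    rootMultiplicity_X_sub_C_pow, rootMultiplicity_eq_zero hvz, hk]

/-- Proposition 1(b): if `j = j₁/j₂` is a rational Belyi function unramified outside
`{0,1,∞}` with `deg j₁ = N > deg j₂` and `N ≥ 1`, then the radical `Λ` of
`j₁·j₂·(j₁ − j₂)` has degree `N + 1`, i.e. `j₁·j₂·(j₁−j₂)` has exactly `N + 1`
distinct complex roots. -/
theorem belyi_radical_degree
    (j₁ j₂ : Polynomial ℂ)
    (hcop : IsCoprime j₁ j₂)
    (hdeg : j₂.degree < j₁.degree)
    (hN : 1 ≤ j₁.natDegree)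
    (hunram : ∀ z : ℂ, (derivative j₁ * j₂ - j₁ * derivative j₂).IsRoot z →
      (j₁ * j₂ * (j₁ - j₂)).IsRoot z) :
    (j₁ * j₂ * (j₁ - j₂)).roots.toFinset.card = j₁.natDegree + 1 := by
  classical
  set N := j₁.natDegree with hNdef
  set M := j₂.natDegree with hMdef
  set W := derivative j₁ * j₂ - j₁ * derivative j₂ with hWdef
  set P := j₁ * j₂ * (j₁ - j₂) with hPdef
  -- basic nonvanishing
  have hj₁ : j₁ ≠ 0 := fun h => by simp [h, hNdef] at hN
  have hj₂ : j₂ ≠ 0 := by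
    rintro rfl
    have : IsUnit j₁ := isCoprime_zero_right.mp hcop
    have := natDegree_eq_zero_of_isUnit this
    omega
  have hMN : M < N := natDegree_lt_natDegree hj₂ hdeg
  have hsub : (j₁ - j₂) ≠ 0 := by
    intro h
    have h2 : j₁ = j₂ := sub_eq_zero.mp h
    have : N = M := by rw [hNdef, hMdef, h2]
    omega
  have hP : P ≠ 0 := mul_ne_zero (mul_ne_zero hj₁ hj₂) hsub
  -- degree of j₁ - j₂
  have hsubdeg : (j₁ - j₂).natDegree = N := by
    rw [hNdef]
    exact natDegree_sub_eq_left_of_natDegree_lt hMN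
  have hPdeg : P.natDegree = N + M + N := by
    rw [hPdef, natDegree_mul (mul_ne_zero hj₁ hj₂) hsub, natDegree_mul hj₁ hj₂, hsubdeg]
  -- derivative of j₁
  have hdj₁ : (derivative j₁).natDegree = N - 1 := by
    have := degree_derivative_eq j₁ (by omega)
    have h2 : (derivative j₁) ≠ 0 := fun h => by
      rw [h, degree_zero] at this; exact (by simp at this)
    rw [degree_eq_natDegree h2] at this
    exact_mod_cast this
  have hdj₁ne : derivative j₁ ≠ 0 := by
    intro h
    have := degree_derivative_eq j₁ (by omega)
    rw [h, degree_zero] at this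
    simp at this
  -- natDegree of W is N - 1 + M, and W ≠ 0
  have hWdeg : W.natDegree = N - 1 + M ∧ W ≠ 0 := by
    by_cases hM0 : M = 0
    · -- j₂ is a nonzero constant, derivative j₂ = 0
      have hd2 : derivative j₂ = 0 := by
        have hM0' : j₂.natDegree = 0 := hM0
        obtain ⟨c, hc⟩ := natDegree_eq_zero.mp hM0'
        rw [← hc, derivative_C]
      have hW : W = derivative j₁ * j₂ := by rw [hWdef, hd2]; ring
      constructor
      · rw [hW, natDegree_mul hdj₁ne hj₂, hdj₁, ← hMdef, hM0]
      · rw [hW]; exact mul_ne_zero hdj₁ne hj₂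
    · have hM1 : 1 ≤ M := by omega
      have hdj₂ : (derivative j₂).natDegree = M - 1 := by
        have := degree_derivative_eq j₂ (by omega)
        have h2 : (derivative j₂) ≠ 0 := fun h => by
          rw [h, degree_zero] at this; exact (by simp at this)
        rw [degree_eq_natDegree h2] at this
        exact_mod_cast this
      have hdj₂ne : derivative j₂ ≠ 0 := by
        intro h
        have := degree_derivative_eq j₂ (by omega)
        rw [h, degree_zero] at this
        simp at this
      -- coefficient at N - 1 + M
      have hld1 : (derivative j₁).leadingCoeff = j₁.leadingCoeff * (N : ℂ) := by
        have h1 : N - 1 + 1 = N := by omega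
        rw [leadingCoeff, leadingCoeff, hdj₁, coeff_derivative, h1, ← hNdef]
        congr 1
        push_cast [Nat.cast_sub (by omega : 1 ≤ N)]
        ring
      have hc1 : (derivative j₁ * j₂).coeff (N - 1 + M) =
          j₁.leadingCoeff * (N : ℂ) * j₂.leadingCoeff := by
        have h := coeff_mul_degree_add_degree (derivative j₁) j₂
        rw [hdj₁, ← hMdef] at h
        rw [h, hld1]
      have hc2 : (j₁ * derivative j₂).coeff (N - 1 + M) =
          j₁.leadingCoeff * (M : ℂ) * j₂.leadingCoeff := by
        have hld2 : (derivative j₂).leadingCoeff = j₂.leadingCoeff * (M : ℂ) := by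
          have h1 : M - 1 + 1 = M := by omega
          rw [leadingCoeff, leadingCoeff, hdj₂, coeff_derivative, h1, ← hMdef]
          congr 1
          push_cast [Nat.cast_sub (by omega : 1 ≤ M)]
          ring
        have hidx : N - 1 + M = N + (M - 1) := by omega
        have h := coeff_mul_degree_add_degree j₁ (derivative j₂)
        rw [hdj₂, ← hNdef] at h
        rw [hidx, h, hld2]
        ring
      have hcW : W.coeff (N - 1 + M) =
          j₁.leadingCoeff * j₂.leadingCoeff * ((N : ℂ) - (M : ℂ)) := by
        rw [hWdef, coeff_sub, hc1, hc2]; ring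
      have hcWne : W.coeff (N - 1 + M) ≠ 0 := by
        rw [hcW]
        refine mul_ne_zero (mul_ne_zero ?_ ?_) ?_
        · exact leadingCoeff_ne_zero.mpr hj₁
        · exact leadingCoeff_ne_zero.mpr hj₂
        · intro h
          have : (N : ℂ) = (M : ℂ) := by linear_combination h
          have : N = M := by exact_mod_cast this
          omega
      have hle : W.natDegree ≤ N - 1 + M := by
        refine (natDegree_sub_le _ _).trans ?_
        refine max_le ?_ ?_
        · exact natDegree_mul_le.trans (by rw [hdj₁, ← hMdef])
        · refine natDegree_mul_le.trans ?_
          rw [hdj₂, ← hNdef]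
          omega
      have hge : N - 1 + M ≤ W.natDegree := le_natDegree_of_ne_zero hcWne
      exact ⟨le_antisymm hle hge, fun h => hcWne (by simp [h])⟩
  obtain ⟨hWdeg, hWne⟩ := hWdeg
  -- coprimality facts
  have hcop13 : IsCoprime j₁ (j₁ - j₂) := by
    have := (hcop.neg_right).add_mul_left_right 1
    simpa [mul_one] using (by
      have h : -j₂ + j₁ * 1 = j₁ - j₂ := by ring
      rw [h] at this; exact this)
  have hcop23 : IsCoprime j₂ (j₁ - j₂) := by
    have := (hcop.symm).add_mul_left_right (-1)
    have h : j₁ + j₂ * (-1) = j₁ - j₂ := by ring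
    rw [h] at this; exact this
  -- the key pointwise multiplicity identity
  have key : ∀ z ∈ P.roots.toFinset, rootMultiplicity z W + 1 = rootMultiplicity z P := by
    intro z hz
    have hzP : P.IsRoot z := isRoot_of_mem_roots (Multiset.mem_toFinset.mp hz)
    have hzP' : j₁.eval z * j₂.eval z * (j₁ - j₂).eval z = 0 := by
      simpa [hPdef, IsRoot, eval_mul] using hzP
    have hmulP : rootMultiplicity z P =
        rootMultiplicity z j₁ + rootMultiplicity z j₂ + rootMultiplicity z (j₁ - j₂) := by
      rw [hPdef, rootMultiplicity_mul (mul_ne_zero (mul_ne_zero hj₁ hj₂) hsub),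
        rootMultiplicity_mul (mul_ne_zero hj₁ hj₂)]
    rcases mul_eq_zero.mp hzP' with h12 | h3
    · rcases mul_eq_zero.mp h12 with h1 | h2
      · -- z is a root of j₁
        have h1 : j₁.IsRoot z := h1
        have hn2 : ¬ j₂.IsRoot z := coprime_not_both_root hcop h1
        have hn3 : ¬ (j₁ - j₂).IsRoot z := coprime_not_both_root hcop13 h1
        rw [hmulP, rootMultiplicity_eq_zero hn2, rootMultiplicity_eq_zero hn3]
        have := wronskian_rootMult hj₁ h1 hn2
        rw [← hWdef] at this
        omega
      · -- z is a root of j₂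
        have h2 : j₂.IsRoot z := h2
        have hn1 : ¬ j₁.IsRoot z := coprime_not_both_root hcop.symm h2
        have hn3 : ¬ (j₁ - j₂).IsRoot z := coprime_not_both_root hcop23 h2
        rw [hmulP, rootMultiplicity_eq_zero hn1, rootMultiplicity_eq_zero hn3]
        have hWalt : W = -(derivative j₂ * j₁ - j₂ * derivative j₁) := by
          rw [hWdef]; ring
        have := wronskian_rootMult hj₂ h2 hn1
        rw [hWalt, rootMult_neg]
        omega
    · -- z is a root of j₁ - j₂
      have h3 : (j₁ - j₂).IsRoot z := h3
      have hn1 : ¬ j₁.IsRoot z := coprime_not_both_root hcop13.symm h3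
      have hn2 : ¬ j₂.IsRoot z := coprime_not_both_root hcop23.symm h3
      rw [hmulP, rootMultiplicity_eq_zero hn1, rootMultiplicity_eq_zero hn2]
      have hWalt : W = derivative (j₁ - j₂) * j₂ - (j₁ - j₂) * derivative j₂ := by
        rw [hWdef, derivative_sub]; ring
      have := wronskian_rootMult hsub h3 hn2
      rw [hWalt]
      omega
  -- sum of multiplicities of P over its distinct roots
  set S := P.roots.toFinset with hS
  have hsumP : ∑ z ∈ S, rootMultiplicity z P = P.natDegree := by
    have h1 : ∑ z ∈ S, P.roots.count z = P.roots.card :=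
      Multiset.toFinset_sum_count_eq P.roots
    have h2 : P.roots.card = P.natDegree := by
      have := IsAlgClosed.card_roots_eq_natDegree (p := P)
      omega
    calc ∑ z ∈ S, rootMultiplicity z P = ∑ z ∈ S, P.roots.count z := by
          simp [count_roots]
      _ = P.natDegree := by rw [h1, h2]
  -- sum of multiplicities of W over S
  have hsumW : ∑ z ∈ S, rootMultiplicity z W = W.natDegree := by
    have hsubset : W.roots.toFinset ⊆ S := by
      intro z hz
      have hzr : W.IsRoot z := isRoot_of_mem_roots (Multiset.mem_toFinset.mp hz)
      have := hunram z hzr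
      rw [hS, Multiset.mem_toFinset, mem_roots hP]
      exact this
    have h1 : ∑ z ∈ S, W.roots.count z = ∑ z ∈ W.roots.toFinset, W.roots.count z := by
      refine (Finset.sum_subset hsubset ?_).symm
      intro z _ hz
      exact Multiset.count_eq_zero_of_notMem (fun h => hz (Multiset.mem_toFinset.mpr h))
    have h2 : ∑ z ∈ W.roots.toFinset, W.roots.count z = W.roots.card :=
      Multiset.toFinset_sum_count_eq W.roots
    have h3 : W.roots.card = W.natDegree := by
      have := IsAlgClosed.card_roots_eq_natDegree (p := W)
      omega
    calc ∑ z ∈ S, rootMultiplicity z W = ∑ z ∈ S, W.roots.count z := by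
          simp [count_roots]
      _ = W.natDegree := by rw [h1, h2, h3]
  -- combine
  have hfinal : W.natDegree + S.card = P.natDegree := by
    have : ∑ z ∈ S, rootMultiplicity z P = ∑ z ∈ S, (rootMultiplicity z W + 1) :=
      Finset.sum_congr rfl (fun z hz => (key z hz).symm)
    rw [Finset.sum_add_distrib, Finset.sum_const, smul_eq_mul, mul_one, hsumW] at this
    omega
  rw [hWdeg, hPdeg] at hfinal
  omega
end

section
/- Let j₁, j₂ ∈ ℂ[z] be coprime polynomials with N := deg j₁ > deg j₂ =: M and N ≥ 1, and suppose that j = j₁/j₂ is unramified outside {0,1,∞}, i.e. every complex root of j₁′j₂ − j₁j₂′ is a root of j₁·j₂·(j₁ − j₂). Let Λ ∈ ℂ[z] be the monic radical of j₁j₂(j₁−j₂), i.e. Λ(z) = ∏ₜ (z − t) where t runs over the distinct complex roots of j₁·j₂·(j₁−j₂). Then there exists a nonzero constant c ∈ ℂ such that Λ·(j₁′j₂ − j₁j₂′) = c·j₁·j₂·(j₁ − j₂) as polynomials. -/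
open Polynomial

/-- Key lemma: if `a, b` are coprime and `t` is a root of `a` of multiplicity `m`,
then `t` is a root of the Wronskian `a'b - ab'` of multiplicity exactly `m - 1`. -/
lemma wronskian_rootMultiplicity (a b : Polynomial ℂ) (ha : a ≠ 0)
    (hcop : IsCoprime a b) (t : ℂ) (ht : a.IsRoot t) :
    rootMultiplicity t (derivative a * b - a * derivative b)
      = rootMultiplicity t a - 1 := by
  set m := rootMultiplicity t a with hm
  have hm1 : 1 ≤ m := (rootMultiplicity_pos ha).mpr ht
  -- b does not vanish at t
  have hbt : b.eval t ≠ 0 := by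
    obtain ⟨u, v, huv⟩ := hcop
    have := congrArg (eval t) huv
    simp only [eval_add, eval_mul, eval_one, ht.eq_zero, mul_zero, zero_add] at this
    intro h; rw [h, mul_zero] at this; exact zero_ne_one this
  -- derivative of a is nonzero
  have ha' : derivative a ≠ 0 := by
    intro h
    have h0 : a.natDegree = 0 := natDegree_eq_zero_of_derivative_eq_zero h
    obtain ⟨c, hc⟩ := natDegree_eq_zero.mp h0
    rw [← hc] at ht
    simp only [IsRoot, eval_C] at ht
    exact ha (by rw [← hc, ht, map_zero])
  have hma' : rootMultiplicity t (derivative a) = m - 1 :=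
    derivative_rootMultiplicity_of_root ht
  have dvd1 : (X - C t) ^ (m - 1) ∣ derivative a := by
    rw [← hma']; exact pow_rootMultiplicity_dvd _ _
  have dvd2 : (X - C t) ^ m ∣ a := pow_rootMultiplicity_dvd _ _
  have dvd2' : (X - C t) ^ (m - 1) ∣ a :=
    dvd_trans (pow_dvd_pow _ (Nat.sub_le m 1)) dvd2
  have dvdW : (X - C t) ^ (m - 1) ∣ derivative a * b - a * derivative b :=
    dvd_sub (dvd1.mul_right b) (dvd2'.mul_right _)
  -- (X - t)^m does not divide a' * b
  have hnd : ¬ (X - C t) ^ m ∣ derivative a * b := by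
    intro h
    have hXb : ¬ (X - C t) ∣ b := by
      intro hd
      have : b.eval t = 0 := by
        obtain ⟨q, hq⟩ := hd
        simp [hq]
      exact hbt this
    have := (prime_X_sub_C t).pow_dvd_of_dvd_mul_right m hXb h
    have hle : m ≤ rootMultiplicity t (derivative a) :=
      (le_rootMultiplicity_iff ha').mpr this
    omega
  -- (X - t)^m does not divide W
  have hndW : ¬ (X - C t) ^ m ∣ derivative a * b - a * derivative b := by
    intro h
    apply hnd
    have : derivative a * b = (derivative a * b - a * derivative b) + a * derivative b := by
      ring
    rw [this]
    exact dvd_add h (dvd2.mul_right _)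
  have hWne : derivative a * b - a * derivative b ≠ 0 := by
    intro h; exact hndW (h ▸ dvd_zero _)
  have h1 : m - 1 ≤ rootMultiplicity t (derivative a * b - a * derivative b) :=
    (le_rootMultiplicity_iff hWne).mpr dvdW
  have h2 : rootMultiplicity t (derivative a * b - a * derivative b) < m := by
    by_contra hc
    push_neg at hc
    exact hndW ((le_rootMultiplicity_iff hWne).mp hc)
  omega

/-- For a rational Belyi function `j = j₁/j₂` unramified outside `{0,1,∞}`, the
monic radical `Λ` of `j₁·j₂·(j₁−j₂)` satisfies
`Λ·(j₁′j₂ − j₁j₂′) = c·j₁·j₂·(j₁ − j₂)` for some nonzero constant `c`. -/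
theorem belyi_radical_wronskian
    (j₁ j₂ : Polynomial ℂ)
    (hcop : IsCoprime j₁ j₂)
    (hdeg : j₂.degree < j₁.degree)
    (hN : 1 ≤ j₁.natDegree)
    (hunram : ∀ z : ℂ, (derivative j₁ * j₂ - j₁ * derivative j₂).IsRoot z →
      (j₁ * j₂ * (j₁ - j₂)).IsRoot z)
    (Λ : Polynomial ℂ)
    (hΛ : Λ = ∏ t ∈ (j₁ * j₂ * (j₁ - j₂)).roots.toFinset, (X - C t)) :
    ∃ c : ℂ, c ≠ 0 ∧
      Λ * (derivative j₁ * j₂ - j₁ * derivative j₂) = C c * (j₁ * j₂ * (j₁ - j₂)) := by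
  set W : Polynomial ℂ := derivative j₁ * j₂ - j₁ * derivative j₂ with hWdef
  set P : Polynomial ℂ := j₁ * j₂ * (j₁ - j₂) with hPdef
  have hj1 : j₁ ≠ 0 := by
    intro h; rw [h] at hN; simp at hN
  have hj2 : j₂ ≠ 0 := by
    intro h
    rw [h] at hcop
    have := natDegree_eq_zero_of_isUnit (isCoprime_zero_right.mp hcop)
    omega
  have hd12 : j₁ - j₂ ≠ 0 := by
    intro h
    have : j₁ = j₂ := by linear_combination h
    rw [this] at hdeg; exact lt_irrefl _ hdeg
  have hP : P ≠ 0 := mul_ne_zero (mul_ne_zero hj1 hj2) hd12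
  have hj1' : derivative j₁ ≠ 0 := by
    intro h
    have := natDegree_eq_zero_of_derivative_eq_zero h
    omega
  have hW : W ≠ 0 := by
    intro h
    have heq : derivative j₁ * j₂ = j₁ * derivative j₂ := by
      have := sub_eq_zero.mp h; exact this
    have hdvd : j₁ ∣ derivative j₁ * j₂ := ⟨derivative j₂, heq⟩
    have hdvd' : j₁ ∣ derivative j₁ := hcop.dvd_of_dvd_mul_right hdvd
    have := Polynomial.degree_le_of_dvd hdvd' hj1'
    have := Polynomial.degree_derivative_lt hj1
    exact absurd (lt_of_le_of_lt ‹j₁.degree ≤ (derivative j₁).degree› ‹(derivative j₁).degree < j₁.degree›) (lt_irrefl _)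
  have hΛmonic : Λ.Monic := by
    rw [hΛ]; exact monic_prod_of_monic _ _ (fun t _ => monic_X_sub_C t)
  have hΛ0 : Λ ≠ 0 := hΛmonic.ne_zero
  have hΛW : Λ * W ≠ 0 := mul_ne_zero hΛ0 hW
  have hrootsΛ : Λ.roots = (P.roots.toFinset).val := by
    rw [hΛ]; exact roots_prod_X_sub_C _
  -- key counting identity
  have hcount : ∀ t : ℂ, (Λ * W).roots.count t = P.roots.count t := by
    intro t
    rw [count_roots, count_roots, rootMultiplicity_mul hΛW]
    have hΛmul : rootMultiplicity t Λ = Multiset.count t (P.roots.toFinset).val := by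
      rw [← count_roots, hrootsΛ]
    by_cases hroot : P.IsRoot t
    · have htmem : t ∈ P.roots.toFinset := by
        rw [Multiset.mem_toFinset, mem_roots hP]; exact hroot
      have hΛ1 : rootMultiplicity t Λ = 1 := by
        rw [hΛmul, Multiset.count_eq_one_of_mem (P.roots.toFinset).nodup htmem]
      rw [hΛ1]
      -- which factor vanishes at t?
      have heval : j₁.eval t * j₂.eval t * (j₁ - j₂).eval t = 0 := by
        have h := hroot
        rw [IsRoot, hPdef] at h
        simpa [eval_mul] using h
      rw [rootMultiplicity_mul (mul_ne_zero (mul_ne_zero hj1 hj2) hd12),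
        rootMultiplicity_mul (mul_ne_zero hj1 hj2)]
      -- b(t) ≠ 0 whenever a(t) = 0 for coprime a b
      have hcop_eval : ¬ (j₁.eval t = 0 ∧ j₂.eval t = 0) := by
        rintro ⟨h1, h2⟩
        obtain ⟨u, v, huv⟩ := hcop
        have := congrArg (eval t) huv
        simp [h1, h2] at this
      rcases mul_eq_zero.mp heval with h12 | hsub
      · rcases mul_eq_zero.mp h12 with h1 | h2
        · -- t is a root of j₁
          have h2 : j₂.eval t ≠ 0 := fun h => hcop_eval ⟨h1, h⟩
          have hs : (j₁ - j₂).eval t ≠ 0 := by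
            rw [eval_sub, h1, zero_sub]; exact neg_ne_zero.mpr h2
          have e2 : rootMultiplicity t j₂ = 0 := rootMultiplicity_eq_zero h2
          have es : rootMultiplicity t (j₁ - j₂) = 0 := rootMultiplicity_eq_zero hs
          have eW : rootMultiplicity t W = rootMultiplicity t j₁ - 1 :=
            wronskian_rootMultiplicity j₁ j₂ hj1 hcop t h1
          have h1pos : 1 ≤ rootMultiplicity t j₁ := (rootMultiplicity_pos hj1).mpr h1
          rw [e2, es, eW]; omega
        · -- t is a root of j₂
          have h1 : j₁.eval t ≠ 0 := fun h => hcop_eval ⟨h, h2⟩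
          have hs : (j₁ - j₂).eval t ≠ 0 := by
            rw [eval_sub, h2, sub_zero]; exact h1
          have e1 : rootMultiplicity t j₁ = 0 := rootMultiplicity_eq_zero h1
          have es : rootMultiplicity t (j₁ - j₂) = 0 := rootMultiplicity_eq_zero hs
          have hWneg : W = C (-1) * (derivative j₂ * j₁ - j₂ * derivative j₁) := by
            rw [hWdef]; ring_nf; simp [map_neg]; ring
          have eW : rootMultiplicity t W = rootMultiplicity t j₂ - 1 := by
            have hkey := wronskian_rootMultiplicity j₂ j₁ hj2 hcop.symm t h2
            have hne : derivative j₂ * j₁ - j₂ * derivative j₁ ≠ 0 := by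
              intro h
              apply hW
              rw [hWneg, h, mul_zero]
            rw [hWneg, rootMultiplicity_mul (by simpa [hWneg] using hW),
              rootMultiplicity_C, zero_add, hkey]
          have h2pos : 1 ≤ rootMultiplicity t j₂ := (rootMultiplicity_pos hj2).mpr h2
          rw [e1, es, eW]; omega
      · -- t is a root of j₁ - j₂
        have h1 : j₁.eval t ≠ 0 := by
          intro h
          apply hcop_eval
          refine ⟨h, ?_⟩
          have := hsub
          rw [eval_sub, h, zero_sub, neg_eq_zero] at this
          exact this
        have h2 : j₂.eval t ≠ 0 := by
          intro h
          rw [eval_sub, h, sub_zero] at hsub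
          exact h1 hsub
        have e1 : rootMultiplicity t j₁ = 0 := rootMultiplicity_eq_zero h1
        have e2 : rootMultiplicity t j₂ = 0 := rootMultiplicity_eq_zero h2
        have hcop' : IsCoprime (j₁ - j₂) j₂ := by
          have := hcop.add_mul_left_left (-1)
          have heq : j₁ + j₂ * (-1) = j₁ - j₂ := by ring
          rwa [heq] at this
        have hWeq : W = derivative (j₁ - j₂) * j₂ - (j₁ - j₂) * derivative j₂ := by
          rw [hWdef, derivative_sub]; ring
        have eW : rootMultiplicity t W = rootMultiplicity t (j₁ - j₂) - 1 := by
          rw [hWeq]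
          exact wronskian_rootMultiplicity (j₁ - j₂) j₂ hd12 hcop' t hsub
        have hspos : 1 ≤ rootMultiplicity t (j₁ - j₂) :=
          (rootMultiplicity_pos hd12).mpr hsub
        rw [e1, e2, eW]; omega
    · -- t is not a root of P
      have hWnr : ¬ W.IsRoot t := fun h => hroot (hunram t h)
      have eW : rootMultiplicity t W = 0 := rootMultiplicity_eq_zero hWnr
      have eP : rootMultiplicity t P = 0 := rootMultiplicity_eq_zero hroot
      have eΛ : rootMultiplicity t Λ = 0 := by
        rw [hΛmul, Multiset.count_eq_zero]
        intro hmem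
        have : t ∈ P.roots := Multiset.mem_toFinset.mp (Finset.mem_val.mp hmem)
        exact hroot ((mem_roots hP).mp this)
      rw [eΛ, eW, eP]
  have hroots_eq : (Λ * W).roots = P.roots := Multiset.ext.mpr hcount
  -- conclude via splitting over ℂ
  have e1 : Λ * W = C (Λ * W).leadingCoeff * ((Λ * W).roots.map fun a => X - C a).prod :=
    (C_leadingCoeff_mul_prod_multiset_X_sub_C IsAlgClosed.card_roots_eq_natDegree).symm
  have e2 : P = C P.leadingCoeff * (P.roots.map fun a => X - C a).prod :=
    (C_leadingCoeff_mul_prod_multiset_X_sub_C IsAlgClosed.card_roots_eq_natDegree).symm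
  obtain ⟨Q, hQ⟩ : ∃ Q, Q = (Multiset.map (fun a => X - C a) P.roots).prod := ⟨_, rfl⟩
  have e1' : Λ * W = C (Λ * W).leadingCoeff * Q := by rw [hQ, ← hroots_eq]; exact e1
  have e2' : P = C P.leadingCoeff * Q := by rw [hQ]; exact e2
  set L := (Λ * W).leadingCoeff with hLdef
  set p := P.leadingCoeff with hpdef
  have hL0 : L ≠ 0 := leadingCoeff_ne_zero.mpr hΛW
  have hp0 : p ≠ 0 := leadingCoeff_ne_zero.mpr hP
  refine ⟨L * p⁻¹, mul_ne_zero hL0 (inv_ne_zero hp0), ?_⟩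
  rw [e1', e2']
  have hone : C (p⁻¹) * C p = (1 : Polynomial ℂ) := by
    rw [← map_mul, inv_mul_cancel₀ hp0, map_one]
  calc C L * Q = C L * (C p⁻¹ * C p) * Q := by rw [hone]; ring
    _ = C (L * p⁻¹) * (C p * Q) := by rw [map_mul]; ring
end

section
/- Let j₁, j₂ ∈ ℂ[z] be coprime polynomials with N := deg j₁ > deg j₂ =: M and N ≥ 1, suppose j = j₁/j₂ is unramified outside {0,1,∞} (every complex root of j₁′j₂ − j₁j₂′ is a root of j₁·j₂·(j₁−j₂)), let Λ be the monic radical of j₁j₂(j₁−j₂), and let α, β, γ ∈ ℂ. Then for every z ∈ ℂ with j₁(z)·j₂(z)·(j₁(z) − j₂(z)) ≠ 0, the derivative j′(z) of the function j = j₁/j₂ is nonzero and the following identity holds: (γ − (α+β+1)j(z))/(j(z)(1 − j(z)))·j′(z) − j″(z)/j′(z) = Λ′(z)/Λ(z) + (γ−1)·j₁′(z)/j₁(z) + (α+β−γ)·(j₁−j₂)′(z)/(j₁(z)−j₂(z)) − (α+β)·j₂′(z)/j₂(z). -/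
set_option maxHeartbeats 1000000
open Polynomial

private lemma rm_sub_of_dvd {p q : ℂ[X]} {t : ℂ} {m : ℕ}
    (h1 : (X - C t) ^ m ∣ p) (h2 : ¬ (X - C t) ^ (m+1) ∣ p)
    (h3 : (X - C t) ^ (m+1) ∣ q) :
    rootMultiplicity t (p - q) = m := by
  have hne : p - q ≠ 0 := by
    intro h
    exact h2 (sub_eq_zero.mp h ▸ h3)
  refine le_antisymm ?_ ?_
  · rw [rootMultiplicity_le_iff hne]
    intro hd
    exact h2 (by simpa using dvd_add hd h3)
  · rw [le_rootMultiplicity_iff hne]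
    exact dvd_sub h1 ((pow_dvd_pow _ m.le_succ).trans h3)

private lemma rm_wronskian {u v : ℂ[X]} {t : ℂ}
    (hu : u ≠ 0) (hur : u.IsRoot t) (hv : ¬ v.IsRoot t) :
    rootMultiplicity t (derivative u * v - u * derivative v)
      = rootMultiplicity t u - 1 := by
  have hv0 : v ≠ 0 := by rintro rfl; exact hv (by simp [IsRoot])
  have he : 1 ≤ rootMultiplicity t u := (rootMultiplicity_pos hu).mpr hur
  have hdu : derivative u ≠ 0 := by
    intro h
    have := natDegree_eq_zero_of_derivative_eq_zero h
    rcases natDegree_eq_zero.mp this with ⟨a, rfl⟩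
    simp [IsRoot] at hur
    simp [hur] at hu
  have hduv : derivative u * v ≠ 0 := mul_ne_zero hdu hv0
  have hrd : rootMultiplicity t (derivative u) = rootMultiplicity t u - 1 :=
    derivative_rootMultiplicity_of_root hur
  have hmulrm : rootMultiplicity t (derivative u * v) = rootMultiplicity t u - 1 := by
    rw [rootMultiplicity_mul hduv, hrd, rootMultiplicity_eq_zero hv, add_zero]
  apply rm_sub_of_dvd
  · rw [← hmulrm]; exact pow_rootMultiplicity_dvd _ t
  · rw [← hmulrm]; exact pow_rootMultiplicity_not_dvd hduv t
  · have h : (rootMultiplicity t u - 1) + 1 = rootMultiplicity t u := by omega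
    rw [h]
    exact (pow_rootMultiplicity_dvd u t).trans (dvd_mul_right _ _)

private lemma rm_neg (p : ℂ[X]) (t : ℂ) : rootMultiplicity t (-p) = rootMultiplicity t p := by
  rcases eq_or_ne p 0 with rfl | hp
  · simp
  have h1 : -p = C (-1) * p := by simp [neg_one_mul]
  rw [h1, rootMultiplicity_mul (by simpa using hp), rootMultiplicity_eq_zero (by simp [IsRoot]),
    zero_add]

private lemma belyi_factorization (j₁ j₂ : ℂ[X]) (hcop : IsCoprime j₁ j₂)
    (hunram : ∀ z : ℂ, (derivative j₁ * j₂ - j₁ * derivative j₂).IsRoot z →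
      (j₁ * j₂ * (j₁ - j₂)).IsRoot z)
    (hF0 : j₁ * j₂ * (j₁ - j₂) ≠ 0)
    (hW0 : derivative j₁ * j₂ - j₁ * derivative j₂ ≠ 0) :
    j₁ * j₂ * (j₁ - j₂)
      = C ((j₁ * j₂ * (j₁ - j₂)).leadingCoeff
            * (derivative j₁ * j₂ - j₁ * derivative j₂).leadingCoeff⁻¹)
        * ((derivative j₁ * j₂ - j₁ * derivative j₂)
            * ∏ t ∈ (j₁ * j₂ * (j₁ - j₂)).roots.toFinset, (X - C t)) := by
  classical
  set F : ℂ[X] := j₁ * j₂ * (j₁ - j₂) with hFdef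
  set W : ℂ[X] := derivative j₁ * j₂ - j₁ * derivative j₂ with hWdef
  have h10 : j₁ ≠ 0 := fun h => hF0 (by simp [hFdef, h])
  have h20 : j₂ ≠ 0 := fun h => hF0 (by simp [hFdef, h])
  have h120 : j₁ - j₂ ≠ 0 := fun h => hF0 (by simp [hFdef, h])
  -- the multiplicity identity
  have key : ∀ t : ℂ, rootMultiplicity t F
      = rootMultiplicity t W + (if F.IsRoot t then 1 else 0) := by
    intro t
    by_cases hFt : F.IsRoot t
    · have hnot : ¬ (j₁.eval t = 0 ∧ j₂.eval t = 0) := by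
        rintro ⟨e1, e2⟩
        obtain ⟨a, b, hab⟩ := hcop
        have := congrArg (eval t) hab
        simp [e1, e2] at this
      have hrmF : rootMultiplicity t F
          = rootMultiplicity t j₁ + rootMultiplicity t j₂ + rootMultiplicity t (j₁ - j₂) := by
        rw [hFdef, rootMultiplicity_mul hF0, rootMultiplicity_mul (mul_ne_zero h10 h20)]
      have hFt' : j₁.eval t * j₂.eval t * (j₁.eval t - j₂.eval t) = 0 := by
        simpa [hFdef, IsRoot] using hFt
      rw [if_pos hFt, hrmF]
      by_cases h1 : j₁.eval t = 0
      · have h2 : j₂.eval t ≠ 0 := fun h => hnot ⟨h1, h⟩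
        have h12 : (j₁ - j₂).eval t ≠ 0 := by simp [h1, h2]
        have hrmW : rootMultiplicity t W = rootMultiplicity t j₁ - 1 :=
          rm_wronskian h10 h1 h2
        have hpos : 1 ≤ rootMultiplicity t j₁ := (rootMultiplicity_pos h10).mpr h1
        rw [hrmW, rootMultiplicity_eq_zero h2, rootMultiplicity_eq_zero h12]
        omega
      · by_cases h2 : j₂.eval t = 0
        · have h12 : (j₁ - j₂).eval t ≠ 0 := by simp [h1, h2, sub_eq_zero]
          have hWeq : W = -(derivative j₂ * j₁ - j₂ * derivative j₁) := by
            rw [hWdef]; ring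
          have hrmW : rootMultiplicity t W = rootMultiplicity t j₂ - 1 := by
            rw [hWeq, rm_neg]
            exact rm_wronskian h20 h2 h1
          have hpos : 1 ≤ rootMultiplicity t j₂ := (rootMultiplicity_pos h20).mpr h2
          rw [hrmW, rootMultiplicity_eq_zero h1, rootMultiplicity_eq_zero h12]
          omega
        · have h12 : (j₁ - j₂).eval t = 0 := by
            rcases mul_eq_zero.mp hFt' with h | h
            · rcases mul_eq_zero.mp h with h | h
              · exact absurd h h1
              · exact absurd h h2
            · simpa [sub_eq_zero] using h
          have hWeq : W = derivative (j₁ - j₂) * j₂ - (j₁ - j₂) * derivative j₂ := by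
            rw [hWdef]; simp only [derivative_sub]; ring
          have hrmW : rootMultiplicity t W = rootMultiplicity t (j₁ - j₂) - 1 := by
            rw [hWeq]; exact rm_wronskian h120 h12 h2
          have hpos : 1 ≤ rootMultiplicity t (j₁ - j₂) := (rootMultiplicity_pos h120).mpr h12
          rw [hrmW, rootMultiplicity_eq_zero h1, rootMultiplicity_eq_zero h2]
          omega
    · have hWt : ¬ W.IsRoot t := fun h => hFt (hunram t h)
      rw [if_neg hFt, rootMultiplicity_eq_zero hFt, rootMultiplicity_eq_zero hWt]
  -- multiset of roots decomposition
  have hroots : F.roots = W.roots + F.roots.dedup := by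
    ext t
    rw [Multiset.count_add, count_roots, count_roots, Multiset.count_dedup]
    rw [key t]
    congr 1
    simp [mem_roots, hF0]
  -- factorizations
  have hFsplit : C F.leadingCoeff * (F.roots.map fun a => X - C a).prod = F :=
    C_leadingCoeff_mul_prod_multiset_X_sub_C
      (splits_iff_card_roots.mp (IsAlgClosed.splits F))
  have hWsplit : C W.leadingCoeff * (W.roots.map fun a => X - C a).prod = W :=
    C_leadingCoeff_mul_prod_multiset_X_sub_C
      (splits_iff_card_roots.mp (IsAlgClosed.splits W))
  have hΛeq : (∏ t ∈ F.roots.toFinset, (X - C t))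
      = (F.roots.dedup.map fun a => X - C a).prod := by
    rw [Finset.prod_eq_multiset_prod, Multiset.toFinset_val]
  have hWlc : W.leadingCoeff ≠ 0 := leadingCoeff_ne_zero.mpr hW0
  calc F = C F.leadingCoeff * (F.roots.map fun a => X - C a).prod := hFsplit.symm
    _ = C F.leadingCoeff * ((W.roots.map fun a => X - C a).prod
          * (F.roots.dedup.map fun a => X - C a).prod) := by
        conv_lhs => rw [hroots]
        rw [Multiset.map_add, Multiset.prod_add]
    _ = C (F.leadingCoeff * W.leadingCoeff⁻¹)
          * ((C W.leadingCoeff * (W.roots.map fun a => X - C a).prod)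
            * (F.roots.dedup.map fun a => X - C a).prod) := by
        have hc : C F.leadingCoeff
            = C (F.leadingCoeff * W.leadingCoeff⁻¹) * C W.leadingCoeff := by
          rw [← C_mul, mul_assoc, inv_mul_cancel₀ hWlc, mul_one]
        rw [hc]
        ring
    _ = _ := by rw [hWsplit, hΛeq]

private lemma final_field_identity (α β γ a a' a'' b b' b'' L L' : ℂ)
    (ha : a ≠ 0) (hb : b ≠ 0) (hab : a - b ≠ 0)
    (hw : a' * b - a * b' ≠ 0) (hL : L ≠ 0)
    (hLdiv : L' / L
      = ((a' * b + a * b') * (a - b) + a * b * (a' - b')) / (a * b * (a - b))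
        - (a'' * b - a * b'') / (a' * b - a * b')) :
    (γ - (α + β + 1) * (a / b)) / (a / b * (1 - a / b)) * ((a' * b - a * b') / b ^ 2)
      - ((a'' * b - a * b'') * b ^ 2 - (a' * b - a * b') * (2 * b * b')) / (b ^ 2) ^ 2
          / ((a' * b - a * b') / b ^ 2)
    = L' / L + (γ - 1) * (a' / a) + (α + β - γ) * ((a' - b') / (a - b)) - (α + β) * (b' / b) := by
  have hba : b - a ≠ 0 := fun h => hab (by rw [← neg_sub] at h; simpa using neg_eq_zero.mp h)
  have h1 : a / b * (1 - a / b) = a * (b - a) / b ^ 2 := by field_simp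
  have t1 : (γ - (α + β + 1) * (a / b)) / (a / b * (1 - a / b)) * ((a' * b - a * b') / b ^ 2)
      = (γ * b - (α + β + 1) * a) * (a' * b - a * b') / (a * (b - a) * b) := by
    rw [h1, div_mul_div_comm, div_mul_cancel₀ _ (pow_ne_zero 2 hb),
      div_eq_div_iff (mul_ne_zero ha hba) (mul_ne_zero (mul_ne_zero ha hba) hb)]
    field_simp
  have t2 : ((a'' * b - a * b'') * b ^ 2 - (a' * b - a * b') * (2 * b * b')) / (b ^ 2) ^ 2
        / ((a' * b - a * b') / b ^ 2)
      = ((a'' * b - a * b'') * b - (a' * b - a * b') * (2 * b')) / (b * (a' * b - a * b')) := by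
    rw [div_div_eq_mul_div, div_mul_eq_mul_div, div_div,
      div_eq_div_iff (mul_ne_zero (pow_ne_zero 2 (pow_ne_zero 2 hb)) hw) (mul_ne_zero hb hw)]
    ring
  rw [t1, t2, hLdiv]
  rw [div_sub_div _ _ (mul_ne_zero (mul_ne_zero ha hba) hb) (mul_ne_zero hb hw)]
  rw [mul_div_assoc', mul_div_assoc', mul_div_assoc']
  rw [div_sub_div _ _ (mul_ne_zero (mul_ne_zero ha hb) hab) hw]
  rw [div_add_div _ _ (mul_ne_zero (mul_ne_zero (mul_ne_zero ha hb) hab) hw) ha]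
  rw [div_add_div _ _ (mul_ne_zero (mul_ne_zero (mul_ne_zero (mul_ne_zero ha hb) hab) hw) ha) hab]
  rw [div_sub_div _ _ (mul_ne_zero (mul_ne_zero (mul_ne_zero (mul_ne_zero (mul_ne_zero ha hb) hab) hw) ha) hab) hb]
  rw [div_eq_div_iff
    (mul_ne_zero (mul_ne_zero (mul_ne_zero ha hba) hb) (mul_ne_zero hb hw))
    (mul_ne_zero (mul_ne_zero (mul_ne_zero (mul_ne_zero (mul_ne_zero (mul_ne_zero ha hb) hab) hw) ha) hab) hb)]
  ring


/-- The logarithmic-derivative identity used in the proof of Theorem 1: for a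
rational Belyi function `j = j₁/j₂` unramified outside `{0,1,∞}`, away from the
zeros of `j₁·j₂·(j₁−j₂)` the derivative `j′` is nonzero and the pulled-back
hypergeometric first-order coefficient `p₁(j)·j′ − j″/j′` equals
`Λ′/Λ + (γ−1)·j₁′/j₁ + (α+β−γ)·(j₁−j₂)′/(j₁−j₂) − (α+β)·j₂′/j₂`. -/
theorem belyi_pullback_first_order_coefficient
    (j₁ j₂ : Polynomial ℂ)
    (hcop : IsCoprime j₁ j₂)
    (hdeg : j₂.degree < j₁.degree)
    (hN : 1 ≤ j₁.natDegree)
    (hunram : ∀ z : ℂ, (derivative j₁ * j₂ - j₁ * derivative j₂).IsRoot z →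
      (j₁ * j₂ * (j₁ - j₂)).IsRoot z)
    (Λ : Polynomial ℂ)
    (hΛ : Λ = ∏ t ∈ (j₁ * j₂ * (j₁ - j₂)).roots.toFinset, (X - C t))
    (α β γ : ℂ)
    (j : ℂ → ℂ) (hj : j = fun z => j₁.eval z / j₂.eval z) :
    ∀ z : ℂ, j₁.eval z * j₂.eval z * (j₁.eval z - j₂.eval z) ≠ 0 →
      deriv j z ≠ 0 ∧
      (γ - (α + β + 1) * j z) / (j z * (1 - j z)) * deriv j z
          - deriv (deriv j) z / deriv j z
        = (Λ.derivative.eval z) / (Λ.eval z)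
          + (γ - 1) * ((j₁.derivative.eval z) / (j₁.eval z))
          + (α + β - γ) * (((j₁ - j₂).derivative.eval z) / ((j₁ - j₂).eval z))
          - (α + β) * ((j₂.derivative.eval z) / (j₂.eval z)) := by
  intro z hz
  set W : ℂ[X] := derivative j₁ * j₂ - j₁ * derivative j₂ with hWdef
  have ha : j₁.eval z ≠ 0 := left_ne_zero_of_mul (left_ne_zero_of_mul hz)
  have hb : j₂.eval z ≠ 0 := right_ne_zero_of_mul (left_ne_zero_of_mul hz)
  have hab : j₁.eval z - j₂.eval z ≠ 0 := right_ne_zero_of_mul hz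
  have hFz : (j₁ * j₂ * (j₁ - j₂)).eval z ≠ 0 := by simpa using hz
  have hWz : W.eval z ≠ 0 := by
    intro h
    exact hFz (hunram z h)
  have hF0 : j₁ * j₂ * (j₁ - j₂) ≠ 0 := by
    intro h; rw [h] at hFz; simp at hFz
  have hW0 : W ≠ 0 := by
    intro h; rw [h] at hWz; simp at hWz
  have hfact := belyi_factorization j₁ j₂ hcop hunram hF0 hW0
  rw [← hΛ, ← hWdef] at hfact
  set c : ℂ := (j₁ * j₂ * (j₁ - j₂)).leadingCoeff * W.leadingCoeff⁻¹ with hcdef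
  have hev : (j₁ * j₂ * (j₁ - j₂)).eval z = c * (W.eval z * Λ.eval z) := by
    have := congrArg (eval z) hfact
    simpa using this
  have hΛz : Λ.eval z ≠ 0 := by
    intro h
    rw [h] at hev
    simp [hev] at hFz
  have hc : c ≠ 0 := by
    intro h
    rw [h] at hev
    simp [hev] at hFz
  have hdev : (derivative (j₁ * j₂ * (j₁ - j₂))).eval z
      = c * ((derivative W).eval z * Λ.eval z + W.eval z * (derivative Λ).eval z) := by
    have := congrArg (fun p => (derivative p).eval z) hfact
    simpa [derivative_mul, derivative_C] using this
  -- the logarithmic derivative relation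
  have hLdiv : (derivative Λ).eval z / Λ.eval z
      = (derivative (j₁ * j₂ * (j₁ - j₂))).eval z / (j₁ * j₂ * (j₁ - j₂)).eval z
        - (derivative W).eval z / W.eval z := by
    rw [hev, hdev]
    field_simp
    ring
  -- first derivative of j
  have hdj : ∀ w : ℂ, j₂.eval w ≠ 0 →
      HasDerivAt j (W.eval w / (j₂.eval w) ^ 2) w := by
    intro w hw
    rw [hj]
    have h := (j₁.hasDerivAt w).div (j₂.hasDerivAt w) hw
    exact h.congr_deriv (by simp [hWdef])
  have hderivj : deriv j z = W.eval z / (j₂.eval z) ^ 2 := (hdj z hb).deriv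
  have hdj_ne : deriv j z ≠ 0 := by
    rw [hderivj]
    exact div_ne_zero hWz (pow_ne_zero _ hb)
  refine ⟨hdj_ne, ?_⟩
  -- second derivative of j
  have hbev : ∀ᶠ w in nhds z, j₂.eval w ≠ 0 :=
    (j₂.continuous_aeval.continuousAt (x := z)).eventually_ne hb
  have heq : deriv j =ᶠ[nhds z] fun w => W.eval w / (j₂.eval w) ^ 2 :=
    hbev.mono fun w hw => (hdj w hw).deriv
  have h2nd : deriv (deriv j) z
      = ((derivative W).eval z * (j₂.eval z) ^ 2
          - W.eval z * (2 * j₂.eval z ^ 1 * (derivative j₂).eval z))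
        / ((j₂.eval z) ^ 2) ^ 2 := by
    rw [heq.deriv_eq]
    exact (((W.hasDerivAt z).div ((j₂.hasDerivAt z).pow 2) (pow_ne_zero 2 hb))).deriv
  have hjz : j z = eval z j₁ / eval z j₂ := by rw [hj]
  have hw : eval z (derivative j₁) * eval z j₂ - eval z j₁ * eval z (derivative j₂) ≠ 0 := by
    simpa [hWdef] using hWz
  have hWe : eval z W = eval z (derivative j₁) * eval z j₂ - eval z j₁ * eval z (derivative j₂) := by
    simp [hWdef]
  have hW'e : eval z (derivative W)
      = eval z (derivative (derivative j₁)) * eval z j₂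
        - eval z j₁ * eval z (derivative (derivative j₂)) := by
    simp only [hWdef, derivative_mul, derivative_sub, eval_mul, eval_sub, eval_add]
    ring
  have hFe : eval z (j₁ * j₂ * (j₁ - j₂))
      = eval z j₁ * eval z j₂ * (eval z j₁ - eval z j₂) := by simp
  have hF'e : eval z (derivative (j₁ * j₂ * (j₁ - j₂)))
      = (eval z (derivative j₁) * eval z j₂ + eval z j₁ * eval z (derivative j₂))
          * (eval z j₁ - eval z j₂)
        + eval z j₁ * eval z j₂ * (eval z (derivative j₁) - eval z (derivative j₂)) := by
    simp only [derivative_mul, derivative_sub, eval_mul, eval_sub, eval_add]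
  have h12e : eval z (j₁ - j₂) = eval z j₁ - eval z j₂ := by simp
  have h12'e : eval z (derivative (j₁ - j₂)) = eval z (derivative j₁) - eval z (derivative j₂) := by
    simp [derivative_sub]
  rw [hFe, hF'e, hWe, hW'e] at hLdiv
  rw [hjz, hderivj, h2nd, hWe, hW'e, h12e, h12'e, pow_one]
  exact final_field_identity α β γ _ _ _ _ _ _ _ _ ha hb hab hw hΛz hLdiv
end

section
/- Let j₁, j₂ ∈ ℂ[z] be coprime polynomials with N := deg j₁ > deg j₂ =: M and N ≥ 1, suppose j = j₁/j₂ is unramified outside {0,1,∞} (every complex root of j₁′j₂ − j₁j₂′ is a root of j₁·j₂·(j₁−j₂)), let Λ be the monic radical of j₁j₂(j₁−j₂), and let α, β, γ ∈ ℂ. Let U ⊆ ℂ be open with j₁(z)·j₂(z)·(j₁(z)−j₂(z)) ≠ 0 for all z ∈ U, let V ⊆ ℂ \ {0,1} be open with j(U) ⊆ V, let Y be a solution of the hypergeometric equation with parameters α, β, γ on V, and let g : ℂ → ℂ be complex differentiable on U with g(z) ≠ 0 and g′(z) = −α·(j₂′(z)/j₂(z))·g(z) for all z ∈ U. Then the function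 y(z) := g(z)·Y(j(z)) satisfies on U the equation y″ + q₁·y′ + q₂·y = 0, where (writing A₁ = j₁′/j₁, A₂ = (j₁−j₂)′/(j₁−j₂), A₃ = j₂′/j₂) q₁ = Λ′/Λ + (γ−1)·A₁ + (−γ+α+β)·A₂ + (α−β)·A₃ and q₂ = αβ·A₁·A₂ − α·A₃·(A₃ − Λ′/Λ − (γ−β−1)·A₁ + (γ−α)·A₂) + α·j₂″/j₂. -/
open Polynomial



lemma wronskian_rootMult_s6 {p q : Polynomial ℂ} (t : ℂ) (hp : p ≠ 0)
    (hpt : p.eval t = 0) (hqt : q.eval t ≠ 0) :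
    (derivative p * q - p * derivative q).rootMultiplicity t + 1 = p.rootMultiplicity t := by
  have hepos : 0 < p.rootMultiplicity t := (rootMultiplicity_pos hp).2 hpt
  obtain ⟨k, hk⟩ : ∃ k, p.rootMultiplicity t = k + 1 :=
    ⟨p.rootMultiplicity t - 1, (Nat.succ_pred_eq_of_pos hepos).symm⟩
  set u := p /ₘ (X - C t) ^ p.rootMultiplicity t with hu
  have hpu : (X - C t) ^ p.rootMultiplicity t * u = p :=
    pow_mul_divByMonic_rootMultiplicity_eq p t
  have hut : u.eval t ≠ 0 := eval_divByMonic_pow_rootMultiplicity_ne_zero t hp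
  set B : Polynomial ℂ :=
    C ((k + 1 : ℕ) : ℂ) * u * q + (X - C t) * (derivative u * q - u * derivative q) with hB
  have hfact : derivative p * q - p * derivative q = B * (X - C t) ^ k := by
    rw [← hpu, hk, derivative_mul, derivative_pow, derivative_X_sub_C, hB]
    push_cast
    ring
  have hBt : B.eval t ≠ 0 := by
    have : B.eval t = ((k + 1 : ℕ) : ℂ) * u.eval t * q.eval t := by
      simp [hB]
    rw [this]
    exact mul_ne_zero (mul_ne_zero (Nat.cast_ne_zero.mpr (Nat.succ_ne_zero k)) hut) hqt
  have hB0 : B ≠ 0 := fun h => hBt (by rw [h]; simp)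
  rw [hfact, rootMultiplicity_mul_X_sub_C_pow hB0,
    rootMultiplicity_eq_zero (fun h => hBt h), hk]
  omega

lemma belyi_wronskian_eq (j₁ j₂ : Polynomial ℂ) (hcop : IsCoprime j₁ j₂)
    (hj₁0 : j₁ ≠ 0) (hj₂0 : j₂ ≠ 0) (hj₁₂0 : j₁ - j₂ ≠ 0)
    (hW0 : derivative j₁ * j₂ - j₁ * derivative j₂ ≠ 0)
    (hunram : ∀ z : ℂ, (derivative j₁ * j₂ - j₁ * derivative j₂).IsRoot z →
      (j₁ * j₂ * (j₁ - j₂)).IsRoot z) :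
    C (j₁ * j₂ * (j₁ - j₂)).leadingCoeff *
      ((derivative j₁ * j₂ - j₁ * derivative j₂) *
        ∏ t ∈ (j₁ * j₂ * (j₁ - j₂)).roots.toFinset, (X - C t))
    = C (derivative j₁ * j₂ - j₁ * derivative j₂).leadingCoeff * (j₁ * j₂ * (j₁ - j₂)) := by
  classical
  set W : Polynomial ℂ := derivative j₁ * j₂ - j₁ * derivative j₂ with hW
  set R : Polynomial ℂ := j₁ * j₂ * (j₁ - j₂) with hR
  have hR0 : R ≠ 0 := mul_ne_zero (mul_ne_zero hj₁0 hj₂0) hj₁₂0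
  set Λ : Polynomial ℂ := ∏ t ∈ R.roots.toFinset, (X - C t) with hΛ
  have hΛroots : Λ.roots = R.roots.toFinset.val := by rw [hΛ]; exact roots_prod_X_sub_C _
  have hcopt : ∀ t : ℂ, ¬(j₁.eval t = 0 ∧ j₂.eval t = 0) := by
    rintro t ⟨h1, h2⟩
    obtain ⟨u', v', huv⟩ := hcop
    have := congrArg (eval t) huv
    simp [h1, h2] at this
  have hroots : W.roots + Λ.roots = R.roots := by
    ext t
    simp only [Multiset.count_add, count_roots, hΛroots]
    by_cases ht : R.eval t = 0
    · have htmem : t ∈ R.roots.toFinset := by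
        rw [Multiset.mem_toFinset, mem_roots hR0]; exact ht
      rw [Multiset.count_eq_one_of_mem (R.roots.toFinset.nodup) htmem]
      have hmul : R.rootMultiplicity t =
          j₁.rootMultiplicity t + j₂.rootMultiplicity t + (j₁ - j₂).rootMultiplicity t := by
        rw [hR, rootMultiplicity_mul (mul_ne_zero (mul_ne_zero hj₁0 hj₂0) hj₁₂0),
          rootMultiplicity_mul (mul_ne_zero hj₁0 hj₂0)]
      have ht' : j₁.eval t = 0 ∨ j₂.eval t = 0 ∨ j₁.eval t - j₂.eval t = 0 := by
        have h0 : j₁.eval t * j₂.eval t * (j₁.eval t - j₂.eval t) = 0 := by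
          simpa [hR] using ht
        rcases mul_eq_zero.mp h0 with h | h
        · rcases mul_eq_zero.mp h with h | h
          · exact Or.inl h
          · exact Or.inr (Or.inl h)
        · exact Or.inr (Or.inr h)
      rcases ht' with h1 | h2 | h3
      · have h2 : j₂.eval t ≠ 0 := fun h => hcopt t ⟨h1, h⟩
        have h3 : (j₁ - j₂).eval t ≠ 0 := by
          rw [eval_sub, h1, zero_sub]; exact neg_ne_zero.mpr h2
        rw [hmul, rootMultiplicity_eq_zero (fun h => h2 h),
          rootMultiplicity_eq_zero (fun h => h3 h), add_zero, add_zero]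
        exact wronskian_rootMult_s6 t hj₁0 h1 h2
      · have h1 : j₁.eval t ≠ 0 := fun h => hcopt t ⟨h, h2⟩
        have h3 : (j₁ - j₂).eval t ≠ 0 := by
          rw [eval_sub, h2, sub_zero]; exact h1
        rw [hmul, rootMultiplicity_eq_zero (fun h => h1 h),
          rootMultiplicity_eq_zero (fun h => h3 h), zero_add, add_zero]
        have hWP : W = C (-1) * (derivative j₂ * j₁ - j₂ * derivative j₁) := by
          rw [hW]; ring_nf; rw [map_neg, map_one]; ring
        have hP0 : derivative j₂ * j₁ - j₂ * derivative j₁ ≠ 0 := by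
          intro h
          apply hW0
          rw [hWP, h, mul_zero]
        rw [hWP, rootMultiplicity_mul (by rw [← hWP]; exact hW0), rootMultiplicity_C, zero_add]
        exact wronskian_rootMult_s6 t hj₂0 h2 h1
      · have h2 : j₂.eval t ≠ 0 := by
          intro h
          exact hcopt t ⟨by linear_combination h3 + h, h⟩
        have h1 : j₁.eval t ≠ 0 := by
          intro h
          apply h2; linear_combination h - h3
        have h3' : (j₁ - j₂).eval t = 0 := by rw [eval_sub]; exact h3
        rw [hmul, rootMultiplicity_eq_zero (fun h => h1 h),
          rootMultiplicity_eq_zero (fun h => h2 h), zero_add, zero_add]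
        have hWP : W = derivative (j₁ - j₂) * j₂ - (j₁ - j₂) * derivative j₂ := by
          rw [hW, derivative_sub]; ring
        rw [hWP]
        exact wronskian_rootMult_s6 t hj₁₂0 h3' h2
    · have hWt : W.eval t ≠ 0 := by
        intro h0
        exact ht (hunram t h0)
      rw [rootMultiplicity_eq_zero (fun h => hWt h), rootMultiplicity_eq_zero (fun h => ht h),
        Multiset.count_eq_zero_of_notMem]
      intro hmem
      rw [← Finset.mem_def, Multiset.mem_toFinset] at hmem
      exact ht ((mem_roots hR0).mp hmem)
  have hWsplit : C W.leadingCoeff * (W.roots.map fun a => X - C a).prod = W :=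
    C_leadingCoeff_mul_prod_multiset_X_sub_C
      (splits_iff_card_roots.mp (IsAlgClosed.splits _))
  have hRsplit : C R.leadingCoeff * (R.roots.map fun a => X - C a).prod = R :=
    C_leadingCoeff_mul_prod_multiset_X_sub_C
      (splits_iff_card_roots.mp (IsAlgClosed.splits _))
  have hΛprod : Λ = (Λ.roots.map fun a => X - C a).prod := by
    rw [hΛroots, hΛ]
    rfl
  calc C R.leadingCoeff * (W * Λ)
      = C R.leadingCoeff * ((C W.leadingCoeff * (W.roots.map fun a => X - C a).prod) *
        (Λ.roots.map fun a => X - C a).prod) := by rw [hWsplit, ← hΛprod]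
    _ = C W.leadingCoeff * (C R.leadingCoeff *
        (((W.roots + Λ.roots).map fun a => X - C a).prod) ) := by
        rw [Multiset.map_add, Multiset.prod_add]; ring
    _ = C W.leadingCoeff * R := by rw [hroots, hRsplit]

set_option maxHeartbeats 1600000 in
/-- Theorem 1: for a rational Belyi function `j = j₁/j₂` unramified outside
`{0,1,∞}`, the function `g·(Y ∘ j)` (a lift of `j₂^{−α}·₂F₁(α,β,γ; j)`) satisfies
the second order equation `y″ + q₁·y′ + q₂·y = 0` with the explicit coefficients
`q₁ = Λ′/Λ + (γ−1)A₁ + (−γ+α+β)A₂ + (α−β)A₃` and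
`q₂ = αβ·A₁A₂ − α·A₃·(A₃ − Λ′/Λ − (γ−β−1)A₁ + (γ−α)A₂) + α·j₂″/j₂`,
where `A₁ = j₁′/j₁`, `A₂ = (j₁−j₂)′/(j₁−j₂)`, `A₃ = j₂′/j₂`. -/
theorem belyi_pullback_heun
    (j₁ j₂ : Polynomial ℂ)
    (hcop : IsCoprime j₁ j₂)
    (hdeg : j₂.degree < j₁.degree)
    (hN : 1 ≤ j₁.natDegree)
    (hunram : ∀ z : ℂ, (derivative j₁ * j₂ - j₁ * derivative j₂).IsRoot z →
      (j₁ * j₂ * (j₁ - j₂)).IsRoot z)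
    (Λ : Polynomial ℂ)
    (hΛ : Λ = ∏ t ∈ (j₁ * j₂ * (j₁ - j₂)).roots.toFinset, (X - C t))
    (α β γ : ℂ)
    (j : ℂ → ℂ) (hj : j = fun z => j₁.eval z / j₂.eval z)
    (U V : Set ℂ) (hU : IsOpen U) (hV : IsOpen V)
    (hUreg : ∀ z ∈ U, j₁.eval z * j₂.eval z * (j₁.eval z - j₂.eval z) ≠ 0)
    (hV01 : ∀ w ∈ V, w ≠ 0 ∧ w ≠ 1)
    (hjUV : ∀ z ∈ U, j z ∈ V)
    (Y : ℂ → ℂ)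
    (hY₁ : ∀ w ∈ V, DifferentiableAt ℂ Y w)
    (hY₂ : ∀ w ∈ V, DifferentiableAt ℂ (deriv Y) w)
    (hYhyp : ∀ w ∈ V,
      deriv (deriv Y) w + ((γ - (α + β + 1) * w) / (w * (1 - w))) * deriv Y w
        + (α * β / (w * (w - 1))) * Y w = 0)
    (g : ℂ → ℂ)
    (hg₁ : ∀ z ∈ U, DifferentiableAt ℂ g z)
    (hg₀ : ∀ z ∈ U, g z ≠ 0)
    (hg : ∀ z ∈ U, deriv g z = -α * ((j₂.derivative.eval z) / (j₂.eval z)) * g z)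
    (y : ℂ → ℂ) (hy : y = fun z => g z * Y (j z))
    (A₁ A₂ A₃ LΛ q₁ q₂ : ℂ → ℂ)
    (hA₁ : A₁ = fun z => (j₁.derivative.eval z) / (j₁.eval z))
    (hA₂ : A₂ = fun z => ((j₁ - j₂).derivative.eval z) / ((j₁ - j₂).eval z))
    (hA₃ : A₃ = fun z => (j₂.derivative.eval z) / (j₂.eval z))
    (hLΛ : LΛ = fun z => (Λ.derivative.eval z) / (Λ.eval z))
    (hq₁ : q₁ = fun z =>
      LΛ z + (γ - 1) * A₁ z + (-γ + α + β) * A₂ z + (α - β) * A₃ z)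
    (hq₂ : q₂ = fun z =>
      α * β * A₁ z * A₂ z
        - α * A₃ z * (A₃ z - LΛ z - (γ - β - 1) * A₁ z + (γ - α) * A₂ z)
        + α * ((j₂.derivative.derivative.eval z) / (j₂.eval z))) :
    ∀ z ∈ U, deriv (deriv y) z + q₁ z * deriv y z + q₂ z * y z = 0 := by
  intro z hz
  classical
  set W : Polynomial ℂ := derivative j₁ * j₂ - j₁ * derivative j₂ with hWdef
  have hprod := hUreg z hz
  have ha : j₁.eval z ≠ 0 := by intro h0; exact hprod (by rw [h0]; ring)
  have hb : j₂.eval z ≠ 0 := by intro h0; exact hprod (by rw [h0]; ring)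
  have hab : j₁.eval z - j₂.eval z ≠ 0 := by intro h0; exact hprod (by rw [h0]; ring)
  have hj₁0 : j₁ ≠ 0 := fun h => ha (by rw [h]; simp)
  have hj₂0 : j₂ ≠ 0 := fun h => hb (by rw [h]; simp)
  have hj₁₂0 : j₁ - j₂ ≠ 0 := by
    intro h
    apply hab
    have := congrArg (eval z) h
    simpa [eval_sub] using this
  have hR0 : j₁ * j₂ * (j₁ - j₂) ≠ 0 := mul_ne_zero (mul_ne_zero hj₁0 hj₂0) hj₁₂0
  have hRz : (j₁ * j₂ * (j₁ - j₂)).eval z ≠ 0 := by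
    simpa [eval_mul, eval_sub] using hprod
  have hWz : W.eval z ≠ 0 := fun h0 => hRz (hunram z h0)
  have hW0 : W ≠ 0 := fun h => hWz (by rw [h]; simp)
  have hΛz : Λ.eval z ≠ 0 := by
    rw [hΛ, eval_prod]
    refine Finset.prod_ne_zero_iff.mpr fun t ht => ?_
    rw [Multiset.mem_toFinset, mem_roots hR0] at ht
    have hzt : z ≠ t := fun h => hRz (h ▸ ht)
    simpa [sub_ne_zero] using hzt
  -- key polynomial identity
  have hkeyPoly : C (j₁ * j₂ * (j₁ - j₂)).leadingCoeff * (W * Λ)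
      = C W.leadingCoeff * (j₁ * j₂ * (j₁ - j₂)) := by
    rw [hΛ]; exact belyi_wronskian_eq j₁ j₂ hcop hj₁0 hj₂0 hj₁₂0 hW0 hunram
  have hkeyPoly' := congrArg derivative hkeyPoly
  simp only [derivative_mul, derivative_C, zero_mul, zero_add, derivative_sub] at hkeyPoly'
  have e1 := congrArg (eval z) hkeyPoly
  have e2 := congrArg (eval z) hkeyPoly'
  simp only [eval_mul, eval_add, eval_sub, eval_C] at e1 e2
  have hlcR : (j₁ * j₂ * (j₁ - j₂)).leadingCoeff ≠ 0 := leadingCoeff_ne_zero.mpr hR0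
  have hkey : ((derivative W).eval z * Λ.eval z + W.eval z * (derivative Λ).eval z)
        * (j₁.eval z * j₂.eval z * (j₁.eval z - j₂.eval z))
      = W.eval z * Λ.eval z * (((derivative j₁).eval z * j₂.eval z + j₁.eval z * (derivative j₂).eval z) * (j₁.eval z - j₂.eval z) + j₁.eval z * j₂.eval z * ((derivative j₁).eval z - (derivative j₂).eval z)) := by
    apply mul_left_cancel₀ hlcR
    linear_combination (j₁.eval z * j₂.eval z * (j₁.eval z - j₂.eval z)) * e2 - (((derivative j₁).eval z * j₂.eval z + j₁.eval z * (derivative j₂).eval z) * (j₁.eval z - j₂.eval z) + j₁.eval z * j₂.eval z * ((derivative j₁).eval z - (derivative j₂).eval z)) * e1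
  have hw1 : (derivative W).eval z =
      (W.eval z * (((derivative j₁).eval z * j₂.eval z + j₁.eval z * (derivative j₂).eval z) * (j₁.eval z - j₂.eval z) + j₁.eval z * j₂.eval z * ((derivative j₁).eval z - (derivative j₂).eval z)) * Λ.eval z
        - W.eval z * (derivative Λ).eval z * (j₁.eval z * j₂.eval z * (j₁.eval z - j₂.eval z)))
      / ((j₁.eval z * j₂.eval z * (j₁.eval z - j₂.eval z)) * Λ.eval z) := by
    rw [eq_div_iff (mul_ne_zero (mul_ne_zero (mul_ne_zero ha hb) hab) hΛz)]
    linear_combination hkey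
  -- derivative of j on U
  have hbU : ∀ w ∈ U, j₂.eval w ≠ 0 := fun w hw h0 => hUreg w hw (by rw [h0]; ring)
  have hjd : ∀ w ∈ U, HasDerivAt j (W.eval w / j₂.eval w ^ 2) w := by
    intro w hw
    have h := (j₁.hasDerivAt w).div (j₂.hasDerivAt w) (hbU w hw)
    have hWe : W.eval w
        = (derivative j₁).eval w * j₂.eval w - j₁.eval w * (derivative j₂).eval w := by
      rw [hWdef]; simp
    rw [hj, hWe]
    exact h
  set F : ℂ → ℂ := fun w =>
    -α * ((derivative j₂).eval w / j₂.eval w) * g w * Y (j w)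
      + g w * (deriv Y (j w) * (W.eval w / j₂.eval w ^ 2)) with hF
  have hderivy : ∀ w ∈ U, deriv y w = F w := by
    intro w hw
    have hYj : HasDerivAt (fun x => Y (j x))
        (deriv Y (j w) * (W.eval w / j₂.eval w ^ 2)) w :=
      HasDerivAt.comp w ((hY₁ (j w) (hjUV w hw)).hasDerivAt) (hjd w hw)
    have hyd : HasDerivAt y
        (deriv g w * Y (j w) + g w * (deriv Y (j w) * (W.eval w / j₂.eval w ^ 2))) w := by
      rw [hy]
      exact (hg₁ w hw).hasDerivAt.mul hYj
    rw [hyd.deriv, hg w hw, hF]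
  have hFyev : deriv y =ᶠ[nhds z] F :=
    Filter.eventuallyEq_of_mem (hU.mem_nhds hz) hderivy
  -- second derivative
  have hgz : HasDerivAt g (deriv g z) z := (hg₁ z hz).hasDerivAt
  have hjz0 : j z ∈ V := hjUV z hz
  have hr := ((derivative j₂).hasDerivAt z).div (j₂.hasDerivAt z) hb
  have h1 := hr.const_mul (-α)
  have h2 := h1.mul hgz
  have hYjz : HasDerivAt (fun x => Y (j x))
      (deriv Y (j z) * (W.eval z / j₂.eval z ^ 2)) z :=
    HasDerivAt.comp z ((hY₁ (j z) hjz0).hasDerivAt) (hjd z hz)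
  have h3 := h2.mul hYjz
  have hYpj : HasDerivAt (fun x => deriv Y (j x))
      (deriv (deriv Y) (j z) * (W.eval z / j₂.eval z ^ 2)) z :=
    HasDerivAt.comp z ((hY₂ (j z) hjz0).hasDerivAt) (hjd z hz)
  have hjdfun := (W.hasDerivAt z).div ((j₂.hasDerivAt z).pow 2) (pow_ne_zero 2 hb)
  have hfinal := h3.add (hgz.mul (hYpj.mul hjdfun))
  have hdd : deriv (deriv y) z = deriv F z := hFyev.deriv_eq
  rw [hdd, (show HasDerivAt F _ z from hfinal).deriv, hderivy z hz, hy, hF]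
  simp only [hq₁, hq₂, hA₁, hA₂, hA₃, hLΛ, Pi.mul_apply, Pi.div_apply, Pi.pow_apply]
  have hY2 : deriv (deriv Y) (j z)
      = -((γ - (α + β + 1) * j z) / (j z * (1 - j z))) * deriv Y (j z)
        - α * β / (j z * (j z - 1)) * Y (j z) := by
    linear_combination hYhyp (j z) hjz0
  rw [hg z hz, hY2, hw1]
  have hWe : W.eval z
      = (derivative j₁).eval z * j₂.eval z - j₁.eval z * (derivative j₂).eval z := by
    rw [hWdef]; simp
  have hjsub : (derivative (j₁ - j₂)).eval z
      = (derivative j₁).eval z - (derivative j₂).eval z := by simp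
  have hjsub2 : (j₁ - j₂).eval z = j₁.eval z - j₂.eval z := by simp
  rw [hWe, hjsub, hjsub2]
  simp only [hj]
  have hba : j₂.eval z - j₁.eval z ≠ 0 := fun h => hab (by linear_combination -h)
  have hgz0 : g z ≠ 0 := hg₀ z hz
  have hjne : j₁.eval z / j₂.eval z ≠ 0 := div_ne_zero ha hb
  have h1j : 1 - j₁.eval z / j₂.eval z ≠ 0 := by
    rw [sub_ne_zero]
    intro h
    exact hab (by field_simp at h; linear_combination -h)
  have hj1 : j₁.eval z / j₂.eval z - 1 ≠ 0 := fun h => h1j (by linear_combination -h)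
  field_simp
  ring
end

section
/- Let j₁, j₂ ∈ ℂ[z] be coprime polynomials with N := deg j₁ > deg j₂ =: M and N ≥ 1, suppose j = j₁/j₂ is unramified outside {0,1,∞} (every complex root of j₁′j₂ − j₁j₂′ is a root of j₁·j₂·(j₁−j₂)), let Λ be the monic radical of j₁j₂(j₁−j₂), let α, β, γ ∈ ℂ, and let q₁, q₂ ∈ ℂ(z) be the rational functions q₁ = Λ′/Λ + (γ−1)·j₁′/j₁ + (−γ+α+β)·(j₁−j₂)′/(j₁−j₂) + (α−β)·j₂′/j₂ and q₂ = αβ·(j₁′/j₁)·((j₁−j₂)′/(j₁−j₂)) − α·(j₂′/j₂)·(j₂′/j₂ − Λ′/Λ − (γ−β−1)·j₁′/j₁ + (γ−α)·(j₁−j₂)′/(j₁−j₂)) + α·j₂″/j₂. Suppose w ∈ ℂ satisfies one of the following: (i) w is a root of j₁ of multiplicity a ≥ 2 with a·(1−γ) = 1; (ii) w is a root of j₁ − j₂ of multiplicity b ≥ 2 with b·(γ−α−β) = 1; (iii) w is a root of j₂ of multiplicity c ≥ 2 with c·(β−α) = 1. Then neither q₁ nor q₂ has a pole at w. -/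
open Polynomial

namespace BelyiAux

noncomputable abbrev A : Polynomial ℂ →+* RatFunc ℂ := algebraMap (Polynomial ℂ) (RatFunc ℂ)




lemma amne {d : Polynomial ℂ} {w : ℂ} (hd : d.eval w ≠ 0) : A d ≠ 0 :=
  RatFunc.algebraMap_ne_zero (fun h => hd (by simp [h]))

def RegVal (w : ℂ) (q : RatFunc ℂ) (v : ℂ) : Prop :=
  ∃ n d : Polynomial ℂ, d.eval w ≠ 0 ∧ n.eval w = v * d.eval w ∧ q = A n / A d

def Reg (w : ℂ) (q : RatFunc ℂ) : Prop := ∃ v, RegVal w q v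

lemma RegVal.reg {w q v} (h : RegVal w q v) : Reg w q := ⟨v, h⟩

lemma regVal_div (n : Polynomial ℂ) {d : Polynomial ℂ} {w : ℂ} (hd : d.eval w ≠ 0) :
    RegVal w (A n / A d) (n.eval w / d.eval w) :=
  ⟨n, d, hd, by field_simp, rfl⟩

lemma reg_div (n : Polynomial ℂ) {d : Polynomial ℂ} {w : ℂ} (hd : d.eval w ≠ 0) :
    Reg w (A n / A d) := (regVal_div n hd).reg

lemma regVal_C (w : ℂ) (c : ℂ) : RegVal w (RatFunc.C c) c :=
  ⟨Polynomial.C c, 1, by simp, by simp, by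
    rw [map_one, div_one, RatFunc.algebraMap_C]⟩

lemma RegVal.add {w q₁ q₂ v₁ v₂} (h₁ : RegVal w q₁ v₁) (h₂ : RegVal w q₂ v₂) :
    RegVal w (q₁ + q₂) (v₁ + v₂) := by
  obtain ⟨n₁, d₁, hd₁, hn₁, rfl⟩ := h₁
  obtain ⟨n₂, d₂, hd₂, hn₂, rfl⟩ := h₂
  refine ⟨n₁ * d₂ + n₂ * d₁, d₁ * d₂, by simp [hd₁, hd₂], ?_, ?_⟩
  · simp only [eval_add, eval_mul, hn₁, hn₂]; ring
  · rw [div_add_div _ _ (amne hd₁) (amne hd₂)]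
    simp only [map_add, map_mul]; ring_nf

lemma RegVal.mul {w q₁ q₂ v₁ v₂} (h₁ : RegVal w q₁ v₁) (h₂ : RegVal w q₂ v₂) :
    RegVal w (q₁ * q₂) (v₁ * v₂) := by
  obtain ⟨n₁, d₁, hd₁, hn₁, rfl⟩ := h₁
  obtain ⟨n₂, d₂, hd₂, hn₂, rfl⟩ := h₂
  refine ⟨n₁ * n₂, d₁ * d₂, by simp [hd₁, hd₂], ?_, ?_⟩
  · simp only [eval_mul, hn₁, hn₂]; ring
  · rw [div_mul_div_comm]; simp only [map_mul]

lemma RegVal.neg {w q v} (h : RegVal w q v) : RegVal w (-q) (-v) := by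
  obtain ⟨n, d, hd, hn, rfl⟩ := h
  exact ⟨-n, d, hd, by simp [hn], by rw [map_neg]; exact (neg_div _ _).symm⟩

lemma RegVal.sub {w q₁ q₂ v₁ v₂} (h₁ : RegVal w q₁ v₁) (h₂ : RegVal w q₂ v₂) :
    RegVal w (q₁ - q₂) (v₁ - v₂) := by
  rw [sub_eq_add_neg, sub_eq_add_neg]; exact h₁.add h₂.neg

lemma Reg.add {w q₁ q₂} (h₁ : Reg w q₁) (h₂ : Reg w q₂) : Reg w (q₁ + q₂) := by
  obtain ⟨v₁, h₁⟩ := h₁; obtain ⟨v₂, h₂⟩ := h₂; exact ⟨_, h₁.add h₂⟩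

lemma Reg.mul {w q₁ q₂} (h₁ : Reg w q₁) (h₂ : Reg w q₂) : Reg w (q₁ * q₂) := by
  obtain ⟨v₁, h₁⟩ := h₁; obtain ⟨v₂, h₂⟩ := h₂; exact ⟨_, h₁.mul h₂⟩

lemma Reg.sub {w q₁ q₂} (h₁ : Reg w q₁) (h₂ : Reg w q₂) : Reg w (q₁ - q₂) := by
  obtain ⟨v₁, h₁⟩ := h₁; obtain ⟨v₂, h₂⟩ := h₂; exact ⟨_, h₁.sub h₂⟩

lemma Reg.denom_ne {w q} (h : Reg w q) : q.denom.eval w ≠ 0 := by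
  obtain ⟨v, n, d, hd, -, rfl⟩ := h
  obtain ⟨e, he⟩ := RatFunc.denom_div_dvd n d
  intro h0
  rw [he, eval_mul, h0, zero_mul] at hd
  exact hd rfl

lemma pole_cancel {w : ℂ} {f r q : RatFunc ℂ} (hf : RegVal w f 0) (hr : Reg w r)
    (hq : q = f / A (X - C w) + r) : Reg w q := by
  obtain ⟨n, d, hd, hn, hfe⟩ := hf
  rw [zero_mul] at hn
  obtain ⟨n₁, hn₁⟩ := (dvd_iff_isRoot.mpr hn : (X - C w) ∣ n)
  have hE : A (X - C w) ≠ 0 := RatFunc.algebraMap_ne_zero (X_sub_C_ne_zero w)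
  have : f / A (X - C w) = A n₁ / A d := by
    rw [hfe, hn₁, map_mul, div_div, mul_comm (A d) (A (X - C w)),
      mul_div_mul_left _ _ hE]
  rw [hq, this]
  exact (reg_div n₁ hd).add hr


lemma logderiv {w : ℂ} {g : Polynomial ℂ} (m : ℕ) (hm : 1 ≤ m) (hg : g.eval w ≠ 0) :
    A (derivative ((X - C w) ^ m * g)) / A ((X - C w) ^ m * g)
      = RatFunc.C (m : ℂ) / A (X - C w) + A (derivative g) / A g := by
  obtain ⟨k, rfl⟩ : ∃ k, m = k + 1 := ⟨m - 1, by omega⟩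
  have hG : A g ≠ 0 := RatFunc.algebraMap_ne_zero (fun h => hg (by simp [h]))
  rw [derivative_mul, derivative_pow, derivative_X_sub_C, mul_one]
  simp only [map_mul, map_add, map_pow, RatFunc.algebraMap_C, map_natCast,
    Nat.add_sub_cancel]
  have hE : A (X - C w) ≠ 0 := RatFunc.algebraMap_ne_zero (X_sub_C_ne_zero w)
  generalize A (derivative g) = G1
  generalize A g = G at hG
  generalize A (X - C w) = E at hE
  field_simp
  push_cast
  ring

lemma logderiv2 {w : ℂ} {g : Polynomial ℂ} (m : ℕ) (hm : 2 ≤ m) (hg : g.eval w ≠ 0) :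
    A (derivative (derivative ((X - C w) ^ m * g))) / A ((X - C w) ^ m * g)
      = RatFunc.C ((m : ℂ) * ((m : ℂ) - 1)) / (A (X - C w) * A (X - C w))
        + RatFunc.C (2 * (m : ℂ)) * (A (derivative g) / A g) / A (X - C w)
        + A (derivative (derivative g)) / A g := by
  obtain ⟨k, rfl⟩ : ∃ k, m = k + 2 := ⟨m - 2, by omega⟩
  have hG : A g ≠ 0 := RatFunc.algebraMap_ne_zero (fun h => hg (by simp [h]))
  rw [derivative_mul, derivative_pow, derivative_X_sub_C, mul_one]
  simp only [derivative_add, derivative_mul, derivative_pow, derivative_X_sub_C,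
    derivative_C, mul_one, zero_mul, zero_add, one_mul]
  simp only [map_mul, map_add, map_pow, RatFunc.algebraMap_C,
    Nat.add_sub_cancel, zero_mul, zero_add, mul_one]
  have hE : A (X - C w) ≠ 0 := RatFunc.algebraMap_ne_zero (X_sub_C_ne_zero w)
  generalize A (derivative (derivative g)) = G2
  generalize A (derivative g) = G1
  generalize A g = G at hG
  generalize A (X - C w) = E at hE
  simp only [map_mul, map_sub, map_one, map_natCast, map_ofNat]
  field_simp
  push_cast
  ring

lemma eval_ne_of_coprime {p q : Polynomial ℂ} (h : IsCoprime p q) (z : ℂ) :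
    p.eval z ≠ 0 ∨ q.eval z ≠ 0 := by
  by_contra hc
  push_neg at hc
  obtain ⟨u, v, huv⟩ := h
  have := congrArg (eval z) huv
  simp [hc.1, hc.2] at this

lemma factor_rm {p : Polynomial ℂ} (hp : p ≠ 0) (z : ℂ) :
    ∃ g, g.eval z ≠ 0 ∧ p = (X - C z) ^ (p.rootMultiplicity z) * g :=
  ⟨p /ₘ (X - C z) ^ (p.rootMultiplicity z),
    eval_divByMonic_pow_rootMultiplicity_ne_zero z hp,
    (pow_mul_divByMonic_rootMultiplicity_eq p z).symm⟩

lemma rootMult_eq {B : Polynomial ℂ} {z : ℂ} (k : ℕ) (hB : B.eval z ≠ 0) :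
    ((X - C z) ^ k * B).rootMultiplicity z = k := by
  have hBne : B ≠ 0 := fun h => hB (by simp [h])
  rw [rootMultiplicity_mul (mul_ne_zero (pow_ne_zero _ (X_sub_C_ne_zero z)) hBne),
    rootMultiplicity_X_sub_C_pow, rootMultiplicity_eq_zero hB, add_zero]

lemma lambda_eval_ne {p : Polynomial ℂ} {z : ℂ} (hz : ¬ p.IsRoot z) :
    (∏ t ∈ p.roots.toFinset, (X - C t)).eval z ≠ 0 := by
  rw [eval_prod]
  rw [Finset.prod_ne_zero_iff]
  intro t ht
  simp only [Multiset.mem_toFinset, mem_roots'] at ht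
  have : z ≠ t := fun h => hz (h ▸ ht.2)
  simp [sub_ne_zero.mpr this]

lemma lambda_factor {p : Polynomial ℂ} (hp : p ≠ 0) {z : ℂ} (hz : p.IsRoot z) :
    ∃ μ : Polynomial ℂ, μ.eval z ≠ 0 ∧
      (∏ t ∈ p.roots.toFinset, (X - C t)) = (X - C z) * μ := by
  have hzmem : z ∈ p.roots.toFinset := by
    rw [Multiset.mem_toFinset, mem_roots']
    exact ⟨hp, hz⟩
  refine ⟨∏ t ∈ p.roots.toFinset.erase z, (X - C t), ?_, ?_⟩
  · rw [eval_prod, Finset.prod_ne_zero_iff]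
    intro t ht
    have : t ≠ z := (Finset.mem_erase.mp ht).1
    simp [sub_ne_zero.mpr (Ne.symm this)]
  · rw [← Finset.mul_prod_erase _ _ hzmem]

lemma global_identity (j₁ j₂ : Polynomial ℂ)
    (hcop : IsCoprime j₁ j₂) (hN : 1 ≤ j₁.natDegree) (hj₂ : j₂ ≠ 0)
    (hunram : ∀ z : ℂ, (derivative j₁ * j₂ - j₁ * derivative j₂).IsRoot z →
      (j₁ * j₂ * (j₁ - j₂)).IsRoot z) (hdne : j₁ - j₂ ≠ 0) :
    ∃ c₀ : ℂ, c₀ ≠ 0 ∧ (derivative j₁ * j₂ - j₁ * derivative j₂)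
        * (∏ t ∈ (j₁ * j₂ * (j₁ - j₂)).roots.toFinset, (X - C t))
      = C c₀ * (j₁ * j₂ * (j₁ - j₂)) := by
  set W := derivative j₁ * j₂ - j₁ * derivative j₂ with hWdef
  set Pi := j₁ * j₂ * (j₁ - j₂) with hPidef
  set Λ := ∏ t ∈ Pi.roots.toFinset, (X - C t) with hΛdef
  have hj₁ : j₁ ≠ 0 := fun h => by simp [h] at hN
  have hPi : Pi ≠ 0 := mul_ne_zero (mul_ne_zero hj₁ hj₂) hdne
  have hW : W ≠ 0 := by
    intro h0
    have hdvd : j₁ ∣ derivative j₁ * j₂ := by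
      have : derivative j₁ * j₂ = j₁ * derivative j₂ := by
        have := sub_eq_zero.mp h0
        linear_combination this
      exact this ▸ Dvd.intro _ rfl
    have hdvd' : j₁ ∣ derivative j₁ := (hcop.dvd_of_dvd_mul_right hdvd)
    have hd0 : derivative j₁ = 0 := by
      by_contra hne
      have := Polynomial.eq_zero_of_dvd_of_degree_lt hdvd' (degree_derivative_lt hj₁)
      exact hne this
    have := natDegree_eq_zero_of_derivative_eq_zero hd0
    omega
  have hΛne : Λ ≠ 0 := by
    rw [hΛdef]
    exact Finset.prod_ne_zero_iff.mpr fun t _ => X_sub_C_ne_zero t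
  have hmults : ∀ z : ℂ, (W * Λ).rootMultiplicity z = Pi.rootMultiplicity z := by
    intro z
    by_cases hroot : Pi.IsRoot z
    · -- z is a root of exactly one of the three factors
      obtain ⟨μ, hμ, hΛfac⟩ := lambda_factor hPi hroot
      have hΛmult : Λ.rootMultiplicity z = 1 := by
        rw [hΛdef, hΛfac, ← pow_one (X - C z)]; exact rootMult_eq 1 hμ
      have hsplit : j₁.eval z = 0 ∨ j₂.eval z = 0 ∨ (j₁ - j₂).eval z = 0 := by
        have := hroot
        simp only [IsRoot, hPidef, eval_mul] at this
        rcases mul_eq_zero.mp this with h | h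
        · rcases mul_eq_zero.mp h with h' | h'
          · exact Or.inl h'
          · exact Or.inr (Or.inl h')
        · exact Or.inr (Or.inr h)
      have hWmult : ∃ m : ℕ, W.rootMultiplicity z + 1 = m ∧ Pi.rootMultiplicity z = m := by
        rcases hsplit with h1 | h2 | h3
        · -- root of j₁
          have hj₂z : j₂.eval z ≠ 0 := (eval_ne_of_coprime hcop z).resolve_left (by simp [h1])
          have hdz : (j₁ - j₂).eval z ≠ 0 := by simp [eval_sub, h1, hj₂z]
          obtain ⟨g, hg, hfac⟩ := factor_rm hj₁ z
          have hm1 : 1 ≤ j₁.rootMultiplicity z := (rootMultiplicity_pos hj₁).mpr h1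
          obtain ⟨k, hk⟩ : ∃ k, j₁.rootMultiplicity z = k + 1 :=
            ⟨j₁.rootMultiplicity z - 1, by omega⟩
          rw [hk] at hfac
          have hWfac : W = (X - C z) ^ k *
              (C ((k : ℂ) + 1) * g * j₂ + (X - C z) * derivative g * j₂
                - (X - C z) * g * derivative j₂) := by
            rw [hWdef]
            conv_lhs => rw [hfac]
            rw [derivative_mul, derivative_pow, derivative_X_sub_C]
            push_cast
            ring
          have hBev : (C ((k : ℂ) + 1) * g * j₂ + (X - C z) * derivative g * j₂
                - (X - C z) * g * derivative j₂).eval z ≠ 0 := by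
            simp only [eval_add, eval_sub, eval_mul, eval_C, eval_X, sub_self, zero_mul,
              mul_zero, add_zero, sub_zero]
            have hk1 : ((k : ℂ) + 1) ≠ 0 := by exact_mod_cast Nat.succ_ne_zero k
            exact mul_ne_zero (mul_ne_zero hk1 hg) hj₂z
          refine ⟨k + 1, ?_, ?_⟩
          · rw [hWfac, rootMult_eq k hBev]
          · rw [hPidef, rootMultiplicity_mul (mul_ne_zero (mul_ne_zero hj₁ hj₂) hdne),
              rootMultiplicity_mul (mul_ne_zero hj₁ hj₂), hk,
              rootMultiplicity_eq_zero (by simpa [IsRoot] using hj₂z),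
              rootMultiplicity_eq_zero (by simpa [IsRoot] using hdz)]
        · -- root of j₂
          have hj₁z : j₁.eval z ≠ 0 := (eval_ne_of_coprime hcop z).resolve_right (by simp [h2])
          have hdz : (j₁ - j₂).eval z ≠ 0 := by simp [eval_sub, h2, hj₁z]
          obtain ⟨g, hg, hfac⟩ := factor_rm hj₂ z
          have hm1 : 1 ≤ j₂.rootMultiplicity z := (rootMultiplicity_pos hj₂).mpr h2
          obtain ⟨k, hk⟩ : ∃ k, j₂.rootMultiplicity z = k + 1 :=
            ⟨j₂.rootMultiplicity z - 1, by omega⟩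
          rw [hk] at hfac
          have hWfac : W = (X - C z) ^ k *
              ((X - C z) * derivative j₁ * g
                - j₁ * (C ((k : ℂ) + 1) * g + (X - C z) * derivative g)) := by
            rw [hWdef]
            conv_lhs => rw [hfac]
            rw [derivative_mul, derivative_pow, derivative_X_sub_C]
            push_cast
            ring
          have hBev : ((X - C z) * derivative j₁ * g
                - j₁ * (C ((k : ℂ) + 1) * g + (X - C z) * derivative g)).eval z ≠ 0 := by
            simp only [eval_add, eval_sub, eval_mul, eval_C, eval_X, sub_self, zero_mul,
              mul_zero, add_zero, sub_zero, zero_sub, neg_ne_zero]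
            have hk1 : ((k : ℂ) + 1) ≠ 0 := by exact_mod_cast Nat.succ_ne_zero k
            exact mul_ne_zero hj₁z (mul_ne_zero hk1 hg)
          refine ⟨k + 1, ?_, ?_⟩
          · rw [hWfac, rootMult_eq k hBev]
          · rw [hPidef, rootMultiplicity_mul (mul_ne_zero (mul_ne_zero hj₁ hj₂) hdne),
              rootMultiplicity_mul (mul_ne_zero hj₁ hj₂), hk,
              rootMultiplicity_eq_zero (by simpa [IsRoot] using hj₁z),
              rootMultiplicity_eq_zero (by simpa [IsRoot] using hdz)]
            omega
        · -- root of j₁ - j₂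
          have hj₂z : j₂.eval z ≠ 0 := by
            intro h0
            have : j₁.eval z = 0 := by
              have := h3; rw [eval_sub, h0, sub_zero] at this; exact this
            rcases eval_ne_of_coprime hcop z with h | h
            · exact h this
            · exact h h0
          have hj₁z : j₁.eval z ≠ 0 := by
            intro h0
            have : j₂.eval z = 0 := by
              rw [eval_sub, h0, zero_sub, neg_eq_zero] at h3; exact h3
            exact hj₂z this
          obtain ⟨g, hg, hfac⟩ := factor_rm hdne z
          have hm1 : 1 ≤ (j₁ - j₂).rootMultiplicity z := (rootMultiplicity_pos hdne).mpr h3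
          obtain ⟨k, hk⟩ : ∃ k, (j₁ - j₂).rootMultiplicity z = k + 1 :=
            ⟨(j₁ - j₂).rootMultiplicity z - 1, by omega⟩
          rw [hk] at hfac
          have hWd : W = derivative (j₁ - j₂) * j₂ - (j₁ - j₂) * derivative j₂ := by
            rw [hWdef, derivative_sub]; ring
          have hWfac : W = (X - C z) ^ k *
              (C ((k : ℂ) + 1) * g * j₂ + (X - C z) * derivative g * j₂
                - (X - C z) * g * derivative j₂) := by
            rw [hWd]
            conv_lhs => rw [hfac]
            rw [derivative_mul, derivative_pow, derivative_X_sub_C]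
            push_cast
            ring
          have hBev : (C ((k : ℂ) + 1) * g * j₂ + (X - C z) * derivative g * j₂
                - (X - C z) * g * derivative j₂).eval z ≠ 0 := by
            simp only [eval_add, eval_sub, eval_mul, eval_C, eval_X, sub_self, zero_mul,
              mul_zero, add_zero, sub_zero]
            have hk1 : ((k : ℂ) + 1) ≠ 0 := by exact_mod_cast Nat.succ_ne_zero k
            exact mul_ne_zero (mul_ne_zero hk1 hg) hj₂z
          refine ⟨k + 1, ?_, ?_⟩
          · rw [hWfac, rootMult_eq k hBev]
          · rw [hPidef, rootMultiplicity_mul (mul_ne_zero (mul_ne_zero hj₁ hj₂) hdne),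
              rootMultiplicity_mul (mul_ne_zero hj₁ hj₂), hk,
              rootMultiplicity_eq_zero (by simpa [IsRoot] using hj₁z),
              rootMultiplicity_eq_zero (by simpa [IsRoot] using hj₂z)]
            omega
      obtain ⟨m, hWm, hPm⟩ := hWmult
      rw [rootMultiplicity_mul (mul_ne_zero hW hΛne), hΛmult, hWm, hPm]
    · -- not a root of Pi
      have hWz : ¬ W.IsRoot z := fun h => hroot (hunram z h)
      have hΛz : Λ.eval z ≠ 0 := lambda_eval_ne hroot
      rw [rootMultiplicity_eq_zero hroot, rootMultiplicity_eq_zero]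
      simp only [IsRoot, eval_mul]
      exact mul_ne_zero (fun h => hWz h) hΛz
  have hroots : (W * Λ).roots = Pi.roots := by
    refine Multiset.ext.mpr fun a => ?_
    rw [count_roots, count_roots, hmults]
  have e1 := (IsAlgClosed.splits (W * Λ)).eq_prod_roots
  have e2 := (IsAlgClosed.splits Pi).eq_prod_roots
  rw [hroots] at e1
  refine ⟨(W * Λ).leadingCoeff / Pi.leadingCoeff, ?_, ?_⟩
  · exact div_ne_zero (leadingCoeff_ne_zero.mpr (mul_ne_zero hW hΛne))
      (leadingCoeff_ne_zero.mpr hPi)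
  · have hlc : Pi.leadingCoeff ≠ 0 := leadingCoeff_ne_zero.mpr hPi
    calc W * Λ = C (W * Λ).leadingCoeff * (Multiset.map (fun a => X - C a) Pi.roots).prod := e1
      _ = C ((W * Λ).leadingCoeff / Pi.leadingCoeff)
            * (C Pi.leadingCoeff * (Multiset.map (fun a => X - C a) Pi.roots).prod) := by
          rw [← mul_assoc, ← C_mul, div_mul_cancel₀ _ hlc]
      _ = C ((W * Λ).leadingCoeff / Pi.leadingCoeff) * Pi := by rw [← e2]


lemma eval_derivative_factor {w : ℂ} (g : Polynomial ℂ) (m : ℕ) (hm : 2 ≤ m) :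
    (derivative ((X - C w) ^ m * g)).eval w = 0 := by
  obtain ⟨k, rfl⟩ : ∃ k, m = k + 2 := ⟨m - 2, by omega⟩
  rw [derivative_mul, derivative_pow, derivative_X_sub_C]
  simp [eval_add, eval_mul, eval_pow, sub_self, zero_pow]

end BelyiAux

open BelyiAux

set_option maxHeartbeats 4000000 in
/-- Corollary 1 (absence of apparent singularities): with `q₁, q₂ ∈ ℂ(z)` the
coefficients of the equation satisfied by `j₂^{−α}·₂F₁(α,β,γ; j)`, if `w` is a
root of `j₁` of multiplicity `a ≥ 2` with `a(1−γ) = 1`, or a root of `j₁ − j₂`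
of multiplicity `b ≥ 2` with `b(γ−α−β) = 1`, or a root of `j₂` of multiplicity
`c ≥ 2` with `c(β−α) = 1`, then neither `q₁` nor `q₂` has a pole at `w`. -/
theorem belyi_pullback_no_apparent_singularity
    (j₁ j₂ : Polynomial ℂ)
    (hcop : IsCoprime j₁ j₂)
    (hdeg : j₂.degree < j₁.degree)
    (hN : 1 ≤ j₁.natDegree)
    (hunram : ∀ z : ℂ, (derivative j₁ * j₂ - j₁ * derivative j₂).IsRoot z →
      (j₁ * j₂ * (j₁ - j₂)).IsRoot z)
    (Λ : Polynomial ℂ)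
    (hΛ : Λ = ∏ t ∈ (j₁ * j₂ * (j₁ - j₂)).roots.toFinset, (X - C t))
    (α β γ : ℂ)
    (P : Polynomial ℂ →+* RatFunc ℂ) (hP : P = algebraMap (Polynomial ℂ) (RatFunc ℂ))
    (q₁ q₂ : RatFunc ℂ)
    (hq₁ : q₁ = P (derivative Λ) / P Λ
        + RatFunc.C (γ - 1) * (P (derivative j₁) / P j₁)
        + RatFunc.C (-γ + α + β) * (P (derivative (j₁ - j₂)) / P (j₁ - j₂))
        + RatFunc.C (α - β) * (P (derivative j₂) / P j₂))
    (hq₂ : q₂ = RatFunc.C (α * β) * (P (derivative j₁) / P j₁)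
          * (P (derivative (j₁ - j₂)) / P (j₁ - j₂))
        - RatFunc.C α * (P (derivative j₂) / P j₂)
          * (P (derivative j₂) / P j₂ - P (derivative Λ) / P Λ
              - RatFunc.C (γ - β - 1) * (P (derivative j₁) / P j₁)
              + RatFunc.C (γ - α) * (P (derivative (j₁ - j₂)) / P (j₁ - j₂)))
        + RatFunc.C α * (P (derivative (derivative j₂)) / P j₂))
    (w : ℂ)
    (hyp : (∃ a : ℕ, 2 ≤ a ∧ j₁.rootMultiplicity w = a ∧ (a : ℂ) * (1 - γ) = 1)
      ∨ (∃ b : ℕ, 2 ≤ b ∧ (j₁ - j₂).rootMultiplicity w = b ∧ (b : ℂ) * (γ - α - β) = 1)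
      ∨ (∃ c : ℕ, 2 ≤ c ∧ j₂.rootMultiplicity w = c ∧ (c : ℂ) * (β - α) = 1)) :
    q₁.denom.eval w ≠ 0 ∧ q₂.denom.eval w ≠ 0 := by
  subst hP
  have hj₁ : j₁ ≠ 0 := fun h => by simp [h] at hN
  have hj₂ : j₂ ≠ 0 := by
    intro h
    rw [h] at hcop
    have := Polynomial.natDegree_eq_zero_of_isUnit (isCoprime_zero_right.mp hcop)
    omega
  have hdne : j₁ - j₂ ≠ 0 := sub_ne_zero.mpr (fun h => by rw [h] at hdeg; exact lt_irrefl _ hdeg)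
  have hPne : j₁ * j₂ * (j₁ - j₂) ≠ 0 := mul_ne_zero (mul_ne_zero hj₁ hj₂) hdne
  rcases hyp with ⟨a, ha2, ham, hacoef⟩ | ⟨b, hb2, hbm, hbcoef⟩ | ⟨c, hc2, hcm, hccoef⟩
  · -- Case (i): w is a root of j₁
    have hj₁w : j₁.eval w = 0 := (rootMultiplicity_pos hj₁).mp (by omega)
    have hj₂w : j₂.eval w ≠ 0 := (eval_ne_of_coprime hcop w).resolve_left (by simp [hj₁w])
    have hdw : (j₁ - j₂).eval w ≠ 0 := by simp [eval_sub, hj₁w, hj₂w]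
    have hPww : (j₁ * j₂ * (j₁ - j₂)).IsRoot w := by simp [IsRoot, eval_mul, hj₁w]
    obtain ⟨μ, hμ, hΛfac⟩ := lambda_factor hPne hPww
    obtain ⟨g, hg, hfac⟩ := factor_rm hj₁ w
    rw [ham] at hfac
    have hL1 : A (derivative j₁) / A j₁
        = RatFunc.C (a : ℂ) / A (X - C w) + A (derivative g) / A g := by
      conv_lhs => rw [hfac]
      exact logderiv a (by omega) hg
    have hLΛ : A (derivative Λ) / A Λ
        = RatFunc.C ((1 : ℕ) : ℂ) / A (X - C w) + A (derivative μ) / A μ := by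
      conv_lhs => rw [hΛ, hΛfac, show ((X : Polynomial ℂ) - C w) * μ = (X - C w) ^ 1 * μ by ring]
      exact logderiv 1 le_rfl hμ
    have hdj₁w : (derivative j₁).eval w = 0 := by
      rw [hfac]; exact eval_derivative_factor g a ha2
    -- q₁
    have hq₁' : q₁ = RatFunc.C (1 + (γ - 1) * (a : ℂ)) / A (X - C w)
        + (A (derivative μ) / A μ
          + RatFunc.C (γ - 1) * (A (derivative g) / A g)
          + RatFunc.C (-γ + α + β) * (A (derivative (j₁ - j₂)) / A (j₁ - j₂))
          + RatFunc.C (α - β) * (A (derivative j₂) / A j₂)) := by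
      rw [hq₁, hLΛ, hL1]
      simp only [map_add, map_sub, map_mul, map_one, map_neg, map_natCast, map_ofNat]
      ring
    have hcoef0 : (1 : ℂ) + (γ - 1) * (a : ℂ) = 0 := by linear_combination -hacoef
    have hfc : RegVal w (RatFunc.C (1 + (γ - 1) * (a : ℂ))) 0 := by
      rw [hcoef0]; exact regVal_C w 0
    have hr₁ : Reg w (A (derivative μ) / A μ
          + RatFunc.C (γ - 1) * (A (derivative g) / A g)
          + RatFunc.C (-γ + α + β) * (A (derivative (j₁ - j₂)) / A (j₁ - j₂))
          + RatFunc.C (α - β) * (A (derivative j₂) / A j₂)) := by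
      repeat'
        first
          | apply Reg.add
          | apply Reg.sub
          | apply Reg.mul
          | exact (regVal_C w _).reg
          | (apply reg_div; assumption)
    have hreg1 : Reg w q₁ := pole_cancel hfc hr₁ hq₁'
    -- q₂
    have hq₂' : q₂ = (RatFunc.C (α * β * (a : ℂ)) * (A (derivative (j₁ - j₂)) / A (j₁ - j₂))
          + RatFunc.C (α * (1 + (γ - β - 1) * (a : ℂ))) * (A (derivative j₂) / A j₂))
            / A (X - C w)
        + (RatFunc.C (α * β) * (A (derivative g) / A g)
              * (A (derivative (j₁ - j₂)) / A (j₁ - j₂))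
          - RatFunc.C α * (A (derivative j₂) / A j₂)
              * (A (derivative j₂) / A j₂ - A (derivative μ) / A μ
                - RatFunc.C (γ - β - 1) * (A (derivative g) / A g)
                + RatFunc.C (γ - α) * (A (derivative (j₁ - j₂)) / A (j₁ - j₂)))
          + RatFunc.C α * (A (derivative (derivative j₂)) / A j₂)) := by
      rw [hq₂, hLΛ, hL1]
      simp only [map_add, map_sub, map_mul, map_one, map_neg, map_natCast, map_ofNat]
      ring
    have hfval : RegVal w
        (RatFunc.C (α * β * (a : ℂ)) * (A (derivative (j₁ - j₂)) / A (j₁ - j₂))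
          + RatFunc.C (α * (1 + (γ - β - 1) * (a : ℂ))) * (A (derivative j₂) / A j₂))
        (α * β * (a : ℂ) * ((derivative (j₁ - j₂)).eval w / (j₁ - j₂).eval w)
          + α * (1 + (γ - β - 1) * (a : ℂ)) * ((derivative j₂).eval w / j₂.eval w)) :=
      ((regVal_C w _).mul (regVal_div _ hdw)).add ((regVal_C w _).mul (regVal_div _ hj₂w))
    have hval0 : α * β * (a : ℂ) * ((derivative (j₁ - j₂)).eval w / (j₁ - j₂).eval w)
          + α * (1 + (γ - β - 1) * (a : ℂ)) * ((derivative j₂).eval w / j₂.eval w) = 0 := by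
      have h1 : (derivative (j₁ - j₂)).eval w = -((derivative j₂).eval w) := by
        rw [derivative_sub, eval_sub, hdj₁w]; ring
      have h2 : (j₁ - j₂).eval w = -(j₂.eval w) := by
        rw [eval_sub, hj₁w]; ring
      rw [h1, h2]
      field_simp
      linear_combination (-α * (derivative j₂).eval w) * hacoef
    rw [hval0] at hfval
    have hr₂ : Reg w (RatFunc.C (α * β) * (A (derivative g) / A g)
              * (A (derivative (j₁ - j₂)) / A (j₁ - j₂))
          - RatFunc.C α * (A (derivative j₂) / A j₂)
              * (A (derivative j₂) / A j₂ - A (derivative μ) / A μ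
                - RatFunc.C (γ - β - 1) * (A (derivative g) / A g)
                + RatFunc.C (γ - α) * (A (derivative (j₁ - j₂)) / A (j₁ - j₂)))
          + RatFunc.C α * (A (derivative (derivative j₂)) / A j₂)) := by
      repeat'
        first
          | apply Reg.add
          | apply Reg.sub
          | apply Reg.mul
          | exact (regVal_C w _).reg
          | (apply reg_div; assumption)
    have hreg2 : Reg w q₂ := pole_cancel hfval hr₂ hq₂'
    exact ⟨hreg1.denom_ne, hreg2.denom_ne⟩
  · -- Case (ii): w is a root of j₁ - j₂
    have hdw0 : (j₁ - j₂).eval w = 0 := (rootMultiplicity_pos hdne).mp (by omega)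
    have hj₂w : j₂.eval w ≠ 0 := by
      intro h0
      have h1 : j₁.eval w = 0 := by
        have := hdw0; rw [eval_sub, h0, sub_zero] at this; exact this
      rcases eval_ne_of_coprime hcop w with h | h
      · exact h h1
      · exact h h0
    have hj₁w : j₁.eval w ≠ 0 := fun h0 => hj₂w (by
      rw [eval_sub, h0, zero_sub, neg_eq_zero] at hdw0; exact hdw0)
    have hPww : (j₁ * j₂ * (j₁ - j₂)).IsRoot w := by simp [IsRoot, eval_mul, hdw0]
    obtain ⟨μ, hμ, hΛfac⟩ := lambda_factor hPne hPww
    obtain ⟨hB, hhB, hfac⟩ := factor_rm hdne w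
    rw [hbm] at hfac
    have hs : A (derivative (j₁ - j₂)) / A (j₁ - j₂)
        = RatFunc.C (b : ℂ) / A (X - C w) + A (derivative hB) / A hB := by
      conv_lhs => rw [hfac]
      exact logderiv b (by omega) hhB
    have hLΛ : A (derivative Λ) / A Λ
        = RatFunc.C ((1 : ℕ) : ℂ) / A (X - C w) + A (derivative μ) / A μ := by
      conv_lhs => rw [hΛ, hΛfac, show ((X : Polynomial ℂ) - C w) * μ = (X - C w) ^ 1 * μ by ring]
      exact logderiv 1 le_rfl hμ
    have hddw : (derivative (j₁ - j₂)).eval w = 0 := by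
      rw [hfac]; exact eval_derivative_factor hB b hb2
    have h1 : (derivative j₁).eval w = (derivative j₂).eval w := by
      have := hddw; rw [derivative_sub, eval_sub, sub_eq_zero] at this; exact this
    have h2 : j₁.eval w = j₂.eval w := by
      have := hdw0; rw [eval_sub, sub_eq_zero] at this; exact this
    -- q₁
    have hq₁' : q₁ = RatFunc.C (1 + (-γ + α + β) * (b : ℂ)) / A (X - C w)
        + (A (derivative μ) / A μ
          + RatFunc.C (γ - 1) * (A (derivative j₁) / A j₁)
          + RatFunc.C (-γ + α + β) * (A (derivative hB) / A hB)
          + RatFunc.C (α - β) * (A (derivative j₂) / A j₂)) := by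
      rw [hq₁, hLΛ, hs]
      simp only [map_add, map_sub, map_mul, map_one, map_neg, map_natCast, map_ofNat]
      ring
    have hcoef0 : (1 : ℂ) + (-γ + α + β) * (b : ℂ) = 0 := by linear_combination -hbcoef
    have hfc : RegVal w (RatFunc.C (1 + (-γ + α + β) * (b : ℂ))) 0 := by
      rw [hcoef0]; exact regVal_C w 0
    have hr₁ : Reg w (A (derivative μ) / A μ
          + RatFunc.C (γ - 1) * (A (derivative j₁) / A j₁)
          + RatFunc.C (-γ + α + β) * (A (derivative hB) / A hB)
          + RatFunc.C (α - β) * (A (derivative j₂) / A j₂)) := by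
      repeat'
        first
          | apply Reg.add
          | apply Reg.sub
          | apply Reg.mul
          | exact (regVal_C w _).reg
          | (apply reg_div; assumption)
    have hreg1 : Reg w q₁ := pole_cancel hfc hr₁ hq₁'
    -- q₂
    have hq₂' : q₂ = (RatFunc.C (α * β * (b : ℂ)) * (A (derivative j₁) / A j₁)
          + RatFunc.C (α * (1 - (γ - α) * (b : ℂ))) * (A (derivative j₂) / A j₂))
            / A (X - C w)
        + (RatFunc.C (α * β) * (A (derivative j₁) / A j₁) * (A (derivative hB) / A hB)
          - RatFunc.C α * (A (derivative j₂) / A j₂)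
              * (A (derivative j₂) / A j₂ - A (derivative μ) / A μ
                - RatFunc.C (γ - β - 1) * (A (derivative j₁) / A j₁)
                + RatFunc.C (γ - α) * (A (derivative hB) / A hB))
          + RatFunc.C α * (A (derivative (derivative j₂)) / A j₂)) := by
      rw [hq₂, hLΛ, hs]
      simp only [map_add, map_sub, map_mul, map_one, map_neg, map_natCast, map_ofNat]
      ring
    have hfval : RegVal w
        (RatFunc.C (α * β * (b : ℂ)) * (A (derivative j₁) / A j₁)
          + RatFunc.C (α * (1 - (γ - α) * (b : ℂ))) * (A (derivative j₂) / A j₂))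
        (α * β * (b : ℂ) * ((derivative j₁).eval w / j₁.eval w)
          + α * (1 - (γ - α) * (b : ℂ)) * ((derivative j₂).eval w / j₂.eval w)) :=
      ((regVal_C w _).mul (regVal_div _ hj₁w)).add ((regVal_C w _).mul (regVal_div _ hj₂w))
    have hval0 : α * β * (b : ℂ) * ((derivative j₁).eval w / j₁.eval w)
          + α * (1 - (γ - α) * (b : ℂ)) * ((derivative j₂).eval w / j₂.eval w) = 0 := by
      rw [h1, h2]
      field_simp
      linear_combination (-α * (derivative j₂).eval w) * hbcoef
    rw [hval0] at hfval
    have hr₂ : Reg w (RatFunc.C (α * β) * (A (derivative j₁) / A j₁)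
            * (A (derivative hB) / A hB)
          - RatFunc.C α * (A (derivative j₂) / A j₂)
              * (A (derivative j₂) / A j₂ - A (derivative μ) / A μ
                - RatFunc.C (γ - β - 1) * (A (derivative j₁) / A j₁)
                + RatFunc.C (γ - α) * (A (derivative hB) / A hB))
          + RatFunc.C α * (A (derivative (derivative j₂)) / A j₂)) := by
      repeat'
        first
          | apply Reg.add
          | apply Reg.sub
          | apply Reg.mul
          | exact (regVal_C w _).reg
          | (apply reg_div; assumption)
    have hreg2 : Reg w q₂ := pole_cancel hfval hr₂ hq₂'
    exact ⟨hreg1.denom_ne, hreg2.denom_ne⟩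
  · -- Case (iii): w is a root of j₂
    have hj₂w0 : j₂.eval w = 0 := (rootMultiplicity_pos hj₂).mp (by omega)
    have hj₁w : j₁.eval w ≠ 0 := (eval_ne_of_coprime hcop w).resolve_right (by simp [hj₂w0])
    have hdw : (j₁ - j₂).eval w ≠ 0 := by simp [eval_sub, hj₂w0, hj₁w]
    have hPww : (j₁ * j₂ * (j₁ - j₂)).IsRoot w := by simp [IsRoot, eval_mul, hj₂w0]
    obtain ⟨μ, hμ, hΛfac⟩ := lambda_factor hPne hPww
    obtain ⟨g, hg, hfac⟩ := factor_rm hj₂ w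
    rw [hcm] at hfac
    obtain ⟨k, hck⟩ : ∃ k, c = k + 2 := ⟨c - 2, by omega⟩
    have hdj₂w : (derivative j₂).eval w = 0 := by
      rw [hfac]; exact eval_derivative_factor g c hc2
    have hcc : ((c : ℕ) : ℂ) ≠ 0 := by
      have : c ≠ 0 := by omega
      exact_mod_cast this
    have hr : A (derivative j₂) / A j₂
        = RatFunc.C (c : ℂ) / A (X - C w) + A (derivative g) / A g := by
      conv_lhs => rw [hfac]
      exact logderiv c (by omega) hg
    have hLΛ : A (derivative Λ) / A Λ
        = RatFunc.C ((1 : ℕ) : ℂ) / A (X - C w) + A (derivative μ) / A μ := by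
      conv_lhs => rw [hΛ, hΛfac, show ((X : Polynomial ℂ) - C w) * μ = (X - C w) ^ 1 * μ by ring]
      exact logderiv 1 le_rfl hμ
    have hT3 : A (derivative (derivative j₂)) / A j₂
        = RatFunc.C ((c : ℂ) * ((c : ℂ) - 1)) / (A (X - C w) * A (X - C w))
          + RatFunc.C (2 * (c : ℂ)) * (A (derivative g) / A g) / A (X - C w)
          + A (derivative (derivative g)) / A g := by
      conv_lhs => rw [hfac]
      exact logderiv2 c hc2 hg
    -- global identity and the local relation at w
    obtain ⟨c₀, hc₀, hglob⟩ := global_identity j₁ j₂ hcop hN hj₂ hunram hdne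
    rw [← hΛ] at hglob
    have hVμ : (derivative j₁ * (X - C w) * g
          - j₁ * (C ((c : ℂ)) * g + (X - C w) * derivative g)) * μ
        = C c₀ * (j₁ * g * (j₁ - j₂)) := by
      have hXne : ((X : Polynomial ℂ) - C w) ^ c ≠ 0 := pow_ne_zero _ (X_sub_C_ne_zero w)
      apply mul_left_cancel₀ hXne
      have lhs1 : (X - C w) ^ c * ((derivative j₁ * (X - C w) * g
            - j₁ * (C ((c : ℂ)) * g + (X - C w) * derivative g)) * μ)
          = (derivative j₁ * j₂ - j₁ * derivative j₂) * Λ := by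
        rw [hΛ, hΛfac]
        conv_rhs => rw [hfac]
        rw [derivative_mul, derivative_pow, derivative_X_sub_C]
        rw [hck]
        push_cast
        ring
      have rhs1 : (X - C w) ^ c * (C c₀ * (j₁ * g * (j₁ - j₂)))
          = C c₀ * (j₁ * j₂ * (j₁ - j₂)) := by
        rw [hfac, hck]
        ring
      rw [lhs1, rhs1, hglob]
    have E0 := congrArg (Polynomial.eval w) hVμ
    simp only [eval_mul, eval_add, eval_sub, eval_C, eval_X, sub_self,
      zero_mul, mul_zero, zero_add, add_zero, mul_one, one_mul, zero_sub, sub_zero,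
      hj₂w0, hdj₂w] at E0
    have hd := congrArg derivative hVμ
    simp only [derivative_mul, derivative_sub, derivative_add, derivative_C,
      derivative_X_sub_C, derivative_X] at hd
    have E1 := congrArg (Polynomial.eval w) hd
    simp only [eval_mul, eval_add, eval_sub, eval_C, eval_X, sub_self, hdj₂w, hj₂w0,
      zero_mul, mul_zero, zero_add, add_zero, mul_one, one_mul, zero_sub, sub_zero,
      eval_one] at E1
    have key : (1 + (c : ℂ)) * (derivative j₁).eval w * g.eval w * μ.eval w
        - j₁.eval w * (derivative g).eval w * μ.eval w
        - (c : ℂ) * j₁.eval w * g.eval w * (derivative μ).eval w = 0 := by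
      apply mul_left_cancel₀ (mul_ne_zero hj₁w hg)
      rw [mul_zero]
      linear_combination (j₁.eval w * g.eval w) * E1
        - (2 * (derivative j₁).eval w * g.eval w + j₁.eval w * (derivative g).eval w) * E0
    -- q₁
    have hq₁' : q₁ = RatFunc.C (1 + (α - β) * (c : ℂ)) / A (X - C w)
        + (A (derivative μ) / A μ
          + RatFunc.C (γ - 1) * (A (derivative j₁) / A j₁)
          + RatFunc.C (-γ + α + β) * (A (derivative (j₁ - j₂)) / A (j₁ - j₂))
          + RatFunc.C (α - β) * (A (derivative g) / A g)) := by
      rw [hq₁, hLΛ, hr]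
      simp only [map_add, map_sub, map_mul, map_one, map_neg, map_natCast, map_ofNat]
      ring
    have hcoef0 : (1 : ℂ) + (α - β) * (c : ℂ) = 0 := by linear_combination -hccoef
    have hfc : RegVal w (RatFunc.C (1 + (α - β) * (c : ℂ))) 0 := by
      rw [hcoef0]; exact regVal_C w 0
    have hr₁ : Reg w (A (derivative μ) / A μ
          + RatFunc.C (γ - 1) * (A (derivative j₁) / A j₁)
          + RatFunc.C (-γ + α + β) * (A (derivative (j₁ - j₂)) / A (j₁ - j₂))
          + RatFunc.C (α - β) * (A (derivative g) / A g)) := by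
      repeat'
        first
          | apply Reg.add
          | apply Reg.sub
          | apply Reg.mul
          | exact (regVal_C w _).reg
          | (apply reg_div; assumption)
    have hreg1 : Reg w q₁ := pole_cancel hfc hr₁ hq₁'
    -- q₂
    have hq₂a : q₂ = RatFunc.C (α * ((c : ℂ) * ((c : ℂ) - 1)) - α * (c : ℂ) * (c : ℂ) + α * (c : ℂ))
            / (A (X - C w) * A (X - C w))
        + (RatFunc.C α * (RatFunc.C (c : ℂ) * (A (derivative μ) / A μ)
              + A (derivative g) / A g
              + RatFunc.C ((γ - β - 1) * (c : ℂ)) * (A (derivative j₁) / A j₁)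
              - RatFunc.C ((γ - α) * (c : ℂ)) * (A (derivative (j₁ - j₂)) / A (j₁ - j₂))))
            / A (X - C w)
        + (RatFunc.C (α * β) * (A (derivative j₁) / A j₁)
              * (A (derivative (j₁ - j₂)) / A (j₁ - j₂))
          - RatFunc.C α * (A (derivative g) / A g)
              * (A (derivative g) / A g - A (derivative μ) / A μ
                - RatFunc.C (γ - β - 1) * (A (derivative j₁) / A j₁)
                + RatFunc.C (γ - α) * (A (derivative (j₁ - j₂)) / A (j₁ - j₂)))
          + RatFunc.C α * (A (derivative (derivative g)) / A g)) := by
      rw [hq₂, hLΛ, hr, hT3]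
      generalize A (derivative (derivative g)) = G2d
      generalize A (derivative (j₁ - j₂)) = Dp
      generalize A (j₁ - j₂) = Dq
      generalize A (derivative j₁) = J1p
      generalize A j₁ = J1q
      generalize A (derivative μ) = Mp
      generalize A μ = Mq
      generalize A (derivative g) = Gp
      generalize A g = Gq
      generalize A (X - C w) = E
      simp only [map_add, map_sub, map_mul, map_one, map_neg, map_natCast, map_ofNat]
      ring
    have hz2 : α * ((c : ℂ) * ((c : ℂ) - 1)) - α * (c : ℂ) * (c : ℂ) + α * (c : ℂ) = 0 := by
      ring
    rw [hz2, map_zero, zero_div, zero_add] at hq₂a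
    have hfval : RegVal w
        (RatFunc.C α * (RatFunc.C (c : ℂ) * (A (derivative μ) / A μ)
              + A (derivative g) / A g
              + RatFunc.C ((γ - β - 1) * (c : ℂ)) * (A (derivative j₁) / A j₁)
              - RatFunc.C ((γ - α) * (c : ℂ)) * (A (derivative (j₁ - j₂)) / A (j₁ - j₂))))
        (α * ((c : ℂ) * ((derivative μ).eval w / μ.eval w)
              + (derivative g).eval w / g.eval w
              + (γ - β - 1) * (c : ℂ) * ((derivative j₁).eval w / j₁.eval w)
              - (γ - α) * (c : ℂ) * ((derivative (j₁ - j₂)).eval w / (j₁ - j₂).eval w))) :=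
      (regVal_C w α).mul ((((regVal_C w _).mul (regVal_div _ hμ)).add
        (regVal_div _ hg)).add ((regVal_C w _).mul (regVal_div _ hj₁w)) |>.sub
        ((regVal_C w _).mul (regVal_div _ hdw)))
    have hval0 : α * ((c : ℂ) * ((derivative μ).eval w / μ.eval w)
              + (derivative g).eval w / g.eval w
              + (γ - β - 1) * (c : ℂ) * ((derivative j₁).eval w / j₁.eval w)
              - (γ - α) * (c : ℂ) * ((derivative (j₁ - j₂)).eval w / (j₁ - j₂).eval w)) = 0 := by
      have h1 : (derivative (j₁ - j₂)).eval w = (derivative j₁).eval w := by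
        rw [derivative_sub, eval_sub, hdj₂w, sub_zero]
      have h2 : (j₁ - j₂).eval w = j₁.eval w := by
        rw [eval_sub, hj₂w0, sub_zero]
      rw [h1, h2]
      field_simp
      linear_combination (-α) * key
        + (-α * μ.eval w * g.eval w * (derivative j₁).eval w) * hccoef
    rw [hval0] at hfval
    have hr₂ : Reg w (RatFunc.C (α * β) * (A (derivative j₁) / A j₁)
              * (A (derivative (j₁ - j₂)) / A (j₁ - j₂))
          - RatFunc.C α * (A (derivative g) / A g)
              * (A (derivative g) / A g - A (derivative μ) / A μ
                - RatFunc.C (γ - β - 1) * (A (derivative j₁) / A j₁)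
                + RatFunc.C (γ - α) * (A (derivative (j₁ - j₂)) / A (j₁ - j₂)))
          + RatFunc.C α * (A (derivative (derivative g)) / A g)) := by
      repeat'
        first
          | apply Reg.add
          | apply Reg.sub
          | apply Reg.mul
          | exact (regVal_C w _).reg
          | (apply reg_div; assumption)
    have hreg2 : Reg w q₂ := pole_cancel hfval hr₂ hq₂a
    exact ⟨hreg1.denom_ne, hreg2.denom_ne⟩
end

section
/- Let α, β, γ ∈ ℂ, let U ⊆ ℂ be open with z·(z−1)·(z+1) ≠ 0 and z² ∉ {0,1} for all z ∈ U, let V ⊆ ℂ \ {0,1} be open containing {z² : z ∈ U}, and let Y be a solution of the hypergeometric equation with parameters α, β, γ on V. Then the function y(z) := Y(z²) satisfies, for all z ∈ U, y″(z) + ((2γ−1)/z + (α+β+1−γ)/(z−1) + (α+β+1−γ)/(z+1))·y′(z) + (4αβ/((z−1)(z+1)))·y(z) = 0. -/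
/-- Row 32 of Table 1b: the quadratic pull-back `j(z) = z²` of the hypergeometric
equation with parameters `α, β, γ` satisfies
`y″ + ((2γ−1)/z + (α+β+1−γ)/(z−1) + (α+β+1−γ)/(z+1))·y′
  + (4αβ/((z−1)(z+1)))·y = 0`. -/
theorem quadratic_pullback_heun
    (α β γ : ℂ)
    (U V : Set ℂ) (hU : IsOpen U) (hV : IsOpen V)
    (hUreg : ∀ z ∈ U, z * (z - 1) * (z + 1) ≠ 0 ∧ z ^ 2 ≠ 0 ∧ z ^ 2 ≠ 1)
    (hV01 : ∀ w ∈ V, w ≠ 0 ∧ w ≠ 1)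
    (hjUV : ∀ z ∈ U, z ^ 2 ∈ V)
    (Y : ℂ → ℂ)
    (hY₁ : ∀ w ∈ V, DifferentiableAt ℂ Y w)
    (hY₂ : ∀ w ∈ V, DifferentiableAt ℂ (deriv Y) w)
    (hYhyp : ∀ w ∈ V,
      deriv (deriv Y) w + ((γ - (α + β + 1) * w) / (w * (1 - w))) * deriv Y w
        + (α * β / (w * (w - 1))) * Y w = 0)
    (y : ℂ → ℂ) (hy : y = fun z => Y (z ^ 2)) :
    ∀ z ∈ U,
      deriv (deriv y) z
        + ((2 * γ - 1) / z + (α + β + 1 - γ) / (z - 1) + (α + β + 1 - γ) / (z + 1))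
            * deriv y z
        + (4 * α * β / ((z - 1) * (z + 1))) * y z = 0 := by
  -- first derivative formula on U
  have hd1 : ∀ z ∈ U, HasDerivAt y (deriv Y (z ^ 2) * (2 * z)) z := by
    intro z hz
    have hsq : HasDerivAt (fun z : ℂ => z ^ 2) (2 * z) z := by
      simpa using (hasDerivAt_pow 2 z)
    have := ((hY₁ _ (hjUV z hz)).hasDerivAt).comp z hsq
    rw [hy]; exact this
  have hderiv1 : ∀ z ∈ U, deriv y z = deriv Y (z ^ 2) * (2 * z) :=
    fun z hz => (hd1 z hz).deriv
  intro z hz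
  obtain ⟨hzprod, hw0, hw1⟩ := hUreg z hz
  have hz0 : z ≠ 0 := fun h => hzprod (by simp [h])
  have hzm : z - 1 ≠ 0 := fun h => hzprod (by simp [h])
  have hzp : z + 1 ≠ 0 := fun h => hzprod (by simp [h])
  have hwm : z ^ 2 - 1 ≠ 0 := sub_ne_zero.mpr hw1
  have hwm' : (1 : ℂ) - z ^ 2 ≠ 0 := fun h => hwm (by linear_combination -h)
  -- second derivative
  have hd2 : HasDerivAt (fun z : ℂ => deriv Y (z ^ 2) * (2 * z))
      (deriv (deriv Y) (z ^ 2) * (2 * z) * (2 * z) + deriv Y (z ^ 2) * 2) z := by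
    have hsq : HasDerivAt (fun z : ℂ => z ^ 2) (2 * z) z := by
      simpa using (hasDerivAt_pow 2 z)
    have h1 : HasDerivAt (fun z : ℂ => deriv Y (z ^ 2))
        (deriv (deriv Y) (z ^ 2) * (2 * z)) z := by
      exact ((hY₂ _ (hjUV z hz)).hasDerivAt).comp z hsq
    have h2 : HasDerivAt (fun z : ℂ => 2 * z) (2 : ℂ) z := by
      simpa using (hasDerivAt_id z).const_mul (2 : ℂ)
    exact h1.mul h2
  have hderiv2 : deriv (deriv y) z
      = deriv (deriv Y) (z ^ 2) * (2 * z) * (2 * z) + deriv Y (z ^ 2) * 2 := by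
    have heq : deriv y =ᶠ[nhds z] fun z => deriv Y (z ^ 2) * (2 * z) := by
      filter_upwards [hU.mem_nhds hz] with x hx using hderiv1 x hx
    rw [heq.deriv_eq]
    exact hd2.deriv
  have hhyp := hYhyp (z ^ 2) (hjUV z hz)
  rw [hderiv2, hderiv1 z hz, hy]
  simp only
  set A := deriv (deriv Y) (z ^ 2)
  set B := deriv Y (z ^ 2)
  set C := Y (z ^ 2)
  have hkey : z ^ 2 * (1 - z ^ 2) * A + (γ - (α + β + 1) * z ^ 2) * B - α * β * C = 0 := by
    field_simp at hhyp
    have h2 : (z ^ 2 * (z ^ 2 - 1)) *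
        (z ^ 2 * (1 - z ^ 2) * A + (γ - (α + β + 1) * z ^ 2) * B - α * β * C) = 0 := by
      linear_combination z ^ 2 * hhyp
    rcases mul_eq_zero.mp h2 with h | h
    · exact absurd h (mul_ne_zero hw0 hwm)
    · exact h
  field_simp
  linear_combination (-(4:ℂ)) * hkey
end

section
/- Let α, β, γ ∈ ℂ with γ − α − β = 1/2, set j(z) = (1/4)·z²(z+3). Let U ⊆ ℂ be open with z·(z+3)·(z−1)·(z+2) ≠ 0 for all z ∈ U, let V ⊆ ℂ \ {0,1} be open with j(U) ⊆ V, and let Y be a solution of the hypergeometric equation with parameters α, β, γ on V. Then the function y(z) := Y(j(z)) satisfies, for all z ∈ U, y″(z) + ((2γ−1)/z + γ/(z+3) + (1/2)/(z−1))·y′(z) + (9αβ/((z+3)(z−1)))·y(z) = 0; in particular, z = −2 (the double root of j − 1) is not a singularity of the resulting equation. -/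
set_option maxHeartbeats 1000000 in
/-- Row 34 of Table 1b: the pull-back by `j(z) = z²(z+3)/4` (ramification data
`(2)(1),(2)(1),(3)`) of the hypergeometric equation with parameters `α, β, γ`
satisfying `γ − α − β = 1/2` gives the Heun equation
`y″ + ((2γ−1)/z + γ/(z+3) + (1/2)/(z−1))·y′ + (9αβ/((z+3)(z−1)))·y = 0`;
in particular the double root `z = −2` of `j − 1` is not a singularity. -/
theorem pullback_z2_zplus3_heun
    (α β γ : ℂ) (hγ : γ - α - β = 1 / 2)
    (j : ℂ → ℂ) (hj : j = fun z => (1 / 4) * z ^ 2 * (z + 3))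
    (U V : Set ℂ) (hU : IsOpen U) (hV : IsOpen V)
    (hUreg : ∀ z ∈ U, z * (z + 3) * (z - 1) * (z + 2) ≠ 0)
    (hV01 : ∀ w ∈ V, w ≠ 0 ∧ w ≠ 1)
    (hjUV : ∀ z ∈ U, j z ∈ V)
    (Y : ℂ → ℂ)
    (hY₁ : ∀ w ∈ V, DifferentiableAt ℂ Y w)
    (hY₂ : ∀ w ∈ V, DifferentiableAt ℂ (deriv Y) w)
    (hYhyp : ∀ w ∈ V,
      deriv (deriv Y) w + ((γ - (α + β + 1) * w) / (w * (1 - w))) * deriv Y w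
        + (α * β / (w * (w - 1))) * Y w = 0)
    (y : ℂ → ℂ) (hy : y = fun z => Y (j z)) :
    ∀ z ∈ U,
      deriv (deriv y) z
        + ((2 * γ - 1) / z + γ / (z + 3) + (1 / 2) / (z - 1)) * deriv y z
        + (9 * α * β / ((z + 3) * (z - 1))) * y z = 0 := by
  intro z hz
  have hreg := hUreg z hz
  have hz0 : z ≠ 0 := by intro h; apply hreg; rw [h]; ring
  have hz3 : z + 3 ≠ 0 := by
    intro h; apply hreg
    rw [show z * (z+3) * (z-1) * (z+2) = (z+3) * (z * (z-1) * (z+2)) by ring, h, zero_mul]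
  have hz1 : z - 1 ≠ 0 := by
    intro h; apply hreg
    rw [show z * (z+3) * (z-1) * (z+2) = (z-1) * (z * (z+3) * (z+2)) by ring, h, zero_mul]
  have hz2 : z + 2 ≠ 0 := by intro h; apply hreg; rw [h, mul_zero]
  -- derivative of j
  have hjd : ∀ x : ℂ, HasDerivAt j ((3/4)*x^2 + (3/2)*x) x := by
    intro x
    have h : HasDerivAt (fun t : ℂ => (1/4)*t^2*(t+3))
        ((1/4)*(↑(2:ℕ) * x^1)*(x+3) + (1/4)*x^2*1) x :=
      ((hasDerivAt_pow 2 x).const_mul _).mul ((hasDerivAt_id x).add_const 3)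
    have h2 : ((1/4):ℂ)*(↑(2:ℕ) * x^1)*(x+3) + (1/4)*x^2*1 = (3/4)*x^2 + (3/2)*x := by
      push_cast; ring
    rw [hj]; exact h2 ▸ h
  have hwV : j z ∈ V := hjUV z hz
  have hyd : ∀ x ∈ U, HasDerivAt y (deriv Y (j x) * ((3/4)*x^2 + (3/2)*x)) x := by
    intro x hx
    rw [hy]
    exact ((hY₁ (j x) (hjUV x hx)).hasDerivAt.comp x (hjd x))
  have hgd : HasDerivAt (fun x => deriv Y (j x) * ((3/4)*x^2 + (3/2)*x))
      (deriv (deriv Y) (j z) * ((3/4)*z^2 + (3/2)*z) * ((3/4)*z^2 + (3/2)*z)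
        + deriv Y (j z) * ((3/2)*z + 3/2)) z := by
    have h1 : HasDerivAt (fun x => deriv Y (j x))
        (deriv (deriv Y) (j z) * ((3/4)*z^2 + (3/2)*z)) z :=
      (hY₂ (j z) hwV).hasDerivAt.comp z (hjd z)
    have h2 : HasDerivAt (fun x : ℂ => (3/4)*x^2 + (3/2)*x) ((3/2)*z + 3/2) z := by
      have h : HasDerivAt (fun t : ℂ => (3/4)*t^2 + (3/2)*t)
          ((3/4)*(↑(2:ℕ) * z^1) + (3/2)*1) z :=
        ((hasDerivAt_pow 2 z).const_mul _).add ((hasDerivAt_id z).const_mul (3/2))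
      have h2' : ((3/4):ℂ)*(↑(2:ℕ) * z^1) + (3/2)*1 = (3/2)*z + 3/2 := by push_cast; ring
      exact h2' ▸ h
    exact h1.mul h2
  have hev : deriv y =ᶠ[nhds z] (fun x => deriv Y (j x) * ((3/4)*x^2 + (3/2)*x)) := by
    filter_upwards [hU.mem_nhds hz] with x hx using (hyd x hx).deriv
  have hdd : deriv (deriv y) z
      = deriv (deriv Y) (j z) * ((3/4)*z^2 + (3/2)*z) * ((3/4)*z^2 + (3/2)*z)
        + deriv Y (j z) * ((3/2)*z + 3/2) := by
    rw [hev.deriv_eq, hgd.deriv]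
  have hd1 : deriv y z = deriv Y (j z) * ((3/4)*z^2 + (3/2)*z) := (hyd z hz).deriv
  have hyz : y z = Y (j z) := by rw [hy]
  have hyp := hYhyp (j z) hwV
  obtain ⟨hw0, hw1⟩ := hV01 (j z) hwV
  have hjz : j z = (1/4)*z^2*(z+3) := by rw [hj]
  rw [hjz] at hyp hw0 hw1 hdd hd1 hyz
  have h1w : (1:ℂ) - (1/4)*z^2*(z+3) ≠ 0 := sub_ne_zero.2 (Ne.symm hw1)
  have hw1s : ((1/4):ℂ)*z^2*(z+3) - 1 ≠ 0 := sub_ne_zero.2 hw1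
  have hγ' : γ = α + β + 1/2 := by linear_combination hγ
  subst hγ'
  set A := Y ((1/4)*z^2*(z+3)) with hA
  set B := deriv Y ((1/4)*z^2*(z+3)) with hB
  set C := deriv (deriv Y) ((1/4)*z^2*(z+3)) with hC
  have h4a : (4:ℂ) - z^2*(z+3) ≠ 0 := by
    intro h; apply h1w; linear_combination h / 4
  have h4b : z^2*(z+3) - (4:ℂ) ≠ 0 := by
    intro h; apply hw1s; linear_combination h / 4
  have hE0 : ((1:ℂ)/4*z^2*(z+3)) * (1 - (1/4)*z^2*(z+3)) ≠ 0 := mul_ne_zero hw0 h1w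
  have hE1 : ((1:ℂ)/4*z^2*(z+3)) * ((1/4)*z^2*(z+3) - 1) ≠ 0 := mul_ne_zero hw0 hw1s
  -- clear denominators in the hypergeometric relation
  have hyp2 : C * (((1/4)*z^2*(z+3)) * (1 - (1/4)*z^2*(z+3)))
      + ((α + β + 1/2) - (α + β + 1) * ((1/4)*z^2*(z+3))) * B
      - α * β * A = 0 := by
    have e1 : ((α + β + 1/2) - (α + β + 1) * ((1/4)*z^2*(z+3)))
          / (((1:ℂ)/4*z^2*(z+3)) * (1 - (1/4)*z^2*(z+3))) * B
          * (((1:ℂ)/4*z^2*(z+3)) * (1 - (1/4)*z^2*(z+3)))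
        = ((α + β + 1/2) - (α + β + 1) * ((1/4)*z^2*(z+3))) * B := by
      rw [div_mul_eq_mul_div ((α + β + 1/2) - (α + β + 1) * ((1/4)*z^2*(z+3)))
          ((((1:ℂ)/4*z^2*(z+3)) * (1 - (1/4)*z^2*(z+3)))) B,
        div_mul_cancel₀ _ hE0]
    have e2 : α * β / (((1:ℂ)/4*z^2*(z+3)) * ((1/4)*z^2*(z+3) - 1)) * A
          * (((1:ℂ)/4*z^2*(z+3)) * (1 - (1/4)*z^2*(z+3)))
        = -(α * β * A) := by
      rw [div_mul_eq_mul_div (α * β)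
          ((((1:ℂ)/4*z^2*(z+3)) * ((1/4)*z^2*(z+3) - 1))) A,
        show ((1:ℂ)/4*z^2*(z+3)) * (1 - (1/4)*z^2*(z+3))
            = -(((1:ℂ)/4*z^2*(z+3)) * ((1/4)*z^2*(z+3) - 1)) by ring,
        mul_neg, div_mul_cancel₀ _ hE1]
    have h := congrArg (fun t => t * (((1:ℂ)/4*z^2*(z+3)) * (1 - (1/4)*z^2*(z+3)))) hyp
    simp only [zero_mul] at h
    linear_combination h - e1 - e2
  have h31 : (z+3)*(z-1) ≠ 0 := mul_ne_zero hz3 hz1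
  have hM : z*((z+3)*(z-1)) ≠ 0 := mul_ne_zero hz0 h31
  have e3 : (2*(α+β+1/2)-1)/z
      = (2*(α+β+1/2)-1)*((z+3)*(z-1)) / (z*((z+3)*(z-1))) := by
    rw [div_eq_div_iff hz0 hM]; ring
  have e4 : (α+β+1/2)/(z+3) = ((α+β+1/2)*(z*(z-1))) / (z*((z+3)*(z-1))) := by
    rw [div_eq_div_iff hz3 hM]; ring
  have e5 : (1/2 : ℂ)/(z-1) = ((1/2 : ℂ)*(z*(z+3))) / (z*((z+3)*(z-1))) := by
    rw [div_eq_div_iff hz1 hM]; ring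
  have e6 : 9*α*β/((z+3)*(z-1)) = (9*α*β*z) / (z*((z+3)*(z-1))) := by
    rw [div_eq_div_iff h31 hM]; ring
  have e7 : C * ((3:ℂ)/4*z^2 + 3/2*z) * (3/4*z^2 + 3/2*z) + B * ((3:ℂ)/2*z + 3/2)
      = (C * ((3:ℂ)/4*z^2 + 3/2*z) * (3/4*z^2 + 3/2*z) + B * ((3:ℂ)/2*z + 3/2))
          * (z*((z+3)*(z-1))) / (z*((z+3)*(z-1))) :=
    (mul_div_cancel_right₀ _ hM).symm
  rw [hdd, hd1, hyz, e3, e4, e5, e6, e7]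
  simp only [← add_div, div_mul_eq_mul_div, ← add_div]
  rw [div_eq_zero_iff]
  left
  linear_combination (-9*z) * hyp2
end

section
/- Let α, β, γ ∈ ℂ with γ − α − β = 1/2, set j(z) = −4z²(z−1)(z+1) = 4z² − 4z⁴. Let U ⊆ ℂ be open with z·(z−1)·(z+1)·(2z²−1) ≠ 0 for all z ∈ U, let V ⊆ ℂ \ {0,1} be open with j(U) ⊆ V, and let Y be a solution of the hypergeometric equation with parameters α, β, γ on V. Then the function y(z) := Y(j(z)) satisfies, for all z ∈ U, y″(z) + ((2γ−1)/z + γ/(z−1) + γ/(z+1))·y′(z) + (16αβ/((z−1)(z+1)))·y(z) = 0; in particular, the double roots ±1/√2 of j − 1 are not singularities of the resulting equation. -/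
/-- Row 35 of Table 1b: the quartic pull-back by `j(z) = −4z²(z−1)(z+1)`
(ramification data `(2)(1)(1),(2)(2),(4)`) of the hypergeometric equation with
parameters `α, β, γ` satisfying `γ − α − β = 1/2` gives the Heun equation
`y″ + ((2γ−1)/z + γ/(z−1) + γ/(z+1))·y′ + (16αβ/((z−1)(z+1)))·y = 0`;
in particular the double roots `±1/√2` of `j − 1` are not singularities. -/
theorem pullback_quartic_heun
    (α β γ : ℂ) (hγ : γ - α - β = 1 / 2)
    (j : ℂ → ℂ) (hj : j = fun z => 4 * z ^ 2 - 4 * z ^ 4)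
    (U V : Set ℂ) (hU : IsOpen U) (hV : IsOpen V)
    (hUreg : ∀ z ∈ U, z * (z - 1) * (z + 1) * (2 * z ^ 2 - 1) ≠ 0)
    (hV01 : ∀ w ∈ V, w ≠ 0 ∧ w ≠ 1)
    (hjUV : ∀ z ∈ U, j z ∈ V)
    (Y : ℂ → ℂ)
    (hY₁ : ∀ w ∈ V, DifferentiableAt ℂ Y w)
    (hY₂ : ∀ w ∈ V, DifferentiableAt ℂ (deriv Y) w)
    (hYhyp : ∀ w ∈ V,
      deriv (deriv Y) w + ((γ - (α + β + 1) * w) / (w * (1 - w))) * deriv Y w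
        + (α * β / (w * (w - 1))) * Y w = 0)
    (y : ℂ → ℂ) (hy : y = fun z => Y (j z)) :
    ∀ z ∈ U,
      deriv (deriv y) z
        + ((2 * γ - 1) / z + γ / (z - 1) + γ / (z + 1)) * deriv y z
        + (16 * α * β / ((z - 1) * (z + 1))) * y z = 0 := by
  subst hj hy
  intro z hz
  have hzU := hUreg z hz
  simp only [mul_ne_zero_iff] at hzU
  obtain ⟨⟨⟨hz0, hz1⟩, hz1'⟩, hz2⟩ := hzU
  have hjd : ∀ x : ℂ, HasDerivAt (fun t : ℂ => 4 * t ^ 2 - 4 * t ^ 4)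
      (8 * x - 16 * x ^ 3) x := by
    intro x
    have h := ((hasDerivAt_pow 2 x).const_mul (4 : ℂ)).sub
      ((hasDerivAt_pow 4 x).const_mul (4 : ℂ))
    convert h using 1 <;> try rfl
    push_cast
    ring
  have hjc : Continuous fun t : ℂ => 4 * t ^ 2 - 4 * t ^ 4 := by continuity
  have hSopen : IsOpen ((fun t : ℂ => 4 * t ^ 2 - 4 * t ^ 4) ⁻¹' V) := hV.preimage hjc
  have hzS : z ∈ (fun t : ℂ => 4 * t ^ 2 - 4 * t ^ 4) ⁻¹' V := hjUV z hz
  have hwV : (4 * z ^ 2 - 4 * z ^ 4 : ℂ) ∈ V := hjUV z hz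
  obtain ⟨hw0, hw1⟩ := hV01 _ hwV
  have hd1 : ∀ x ∈ (fun t : ℂ => 4 * t ^ 2 - 4 * t ^ 4) ⁻¹' V,
      HasDerivAt (fun t : ℂ => Y (4 * t ^ 2 - 4 * t ^ 4))
      (deriv Y (4 * x ^ 2 - 4 * x ^ 4) * (8 * x - 16 * x ^ 3)) x := by
    intro x hx
    exact HasDerivAt.comp x ((hY₁ _ hx).hasDerivAt) (hjd x)
  have heq : (deriv fun t : ℂ => Y (4 * t ^ 2 - 4 * t ^ 4)) =ᶠ[nhds z]
      fun x => deriv Y (4 * x ^ 2 - 4 * x ^ 4) * (8 * x - 16 * x ^ 3) := by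
    filter_upwards [hSopen.mem_nhds hzS] with x hx
    exact (hd1 x hx).deriv
  have hd2 : HasDerivAt
      (fun x => deriv Y (4 * x ^ 2 - 4 * x ^ 4) * (8 * x - 16 * x ^ 3))
      (deriv (deriv Y) (4 * z ^ 2 - 4 * z ^ 4) * (8 * z - 16 * z ^ 3) * (8 * z - 16 * z ^ 3)
        + deriv Y (4 * z ^ 2 - 4 * z ^ 4) * (8 - 48 * z ^ 2)) z := by
    have hA : HasDerivAt (fun x : ℂ => deriv Y (4 * x ^ 2 - 4 * x ^ 4))
        (deriv (deriv Y) (4 * z ^ 2 - 4 * z ^ 4) * (8 * z - 16 * z ^ 3)) z :=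
      HasDerivAt.comp (h₂ := deriv Y) z ((hY₂ _ hwV).hasDerivAt) (hjd z)
    have hB : HasDerivAt (fun x : ℂ => 8 * x - 16 * x ^ 3) (8 - 48 * z ^ 2) z := by
      have h := ((hasDerivAt_id z).const_mul (8 : ℂ)).sub
        ((hasDerivAt_pow 3 z).const_mul (16 : ℂ))
      convert h using 1 <;> try rfl
      push_cast
      ring
    exact hA.mul hB
  have hdd : deriv (deriv fun t : ℂ => Y (4 * t ^ 2 - 4 * t ^ 4)) z
      = deriv (deriv Y) (4 * z ^ 2 - 4 * z ^ 4) * (8 * z - 16 * z ^ 3) * (8 * z - 16 * z ^ 3)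
        + deriv Y (4 * z ^ 2 - 4 * z ^ 4) * (8 - 48 * z ^ 2) := by
    rw [heq.deriv_eq]
    exact hd2.deriv
  have hd1z : deriv (fun t : ℂ => Y (4 * t ^ 2 - 4 * t ^ 4)) z
      = deriv Y (4 * z ^ 2 - 4 * z ^ 4) * (8 * z - 16 * z ^ 3) := (hd1 z hzS).deriv
  have hhyp := hYhyp _ hwV
  have hddY : deriv (deriv Y) (4 * z ^ 2 - 4 * z ^ 4)
      = -(((γ - (α + β + 1) * (4 * z ^ 2 - 4 * z ^ 4)) /
          ((4 * z ^ 2 - 4 * z ^ 4) * (1 - (4 * z ^ 2 - 4 * z ^ 4)))) * deriv Y (4 * z ^ 2 - 4 * z ^ 4)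
        + (α * β / ((4 * z ^ 2 - 4 * z ^ 4) * ((4 * z ^ 2 - 4 * z ^ 4) - 1))) *
            Y (4 * z ^ 2 - 4 * z ^ 4)) := by
    linear_combination hhyp
  have e1 : (4 * z ^ 2 - 4 * z ^ 4 : ℂ) * (1 - (4 * z ^ 2 - 4 * z ^ 4))
      = 4 * z ^ 2 * ((1 - z) * (1 + z)) * (2 * z ^ 2 - 1) ^ 2 := by ring
  have e2 : (4 * z ^ 2 - 4 * z ^ 4 : ℂ) * ((4 * z ^ 2 - 4 * z ^ 4) - 1)
      = -(4 * z ^ 2 * ((1 - z) * (1 + z)) * (2 * z ^ 2 - 1) ^ 2) := by ring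
  rw [hdd, hd1z, hddY, e1, e2]
  have hγ' : γ = α + β + 1 / 2 := by linear_combination hγ
  subst hγ'
  have h1z : (1 - z : ℂ) ≠ 0 := fun h => hz1 (by linear_combination -h)
  have h1z' : (1 + z : ℂ) ≠ 0 := fun h => hz1' (by linear_combination h)
  have hden : (4 * z ^ 2 * ((1 - z) * (1 + z)) * (2 * z ^ 2 - 1) ^ 2 : ℂ) ≠ 0 := by
    refine mul_ne_zero (mul_ne_zero (mul_ne_zero (by norm_num) (pow_ne_zero _ hz0))
      (mul_ne_zero h1z h1z')) (pow_ne_zero _ hz2)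
  set D := deriv Y (4 * z ^ 2 - 4 * z ^ 4) with hD
  set W := Y (4 * z ^ 2 - 4 * z ^ 4) with hW
  have split :
      -((α + β + 1 / 2 - (α + β + 1) * (4 * z ^ 2 - 4 * z ^ 4)) /
            (4 * z ^ 2 * ((1 - z) * (1 + z)) * (2 * z ^ 2 - 1) ^ 2) * D
          + α * β / -(4 * z ^ 2 * ((1 - z) * (1 + z)) * (2 * z ^ 2 - 1) ^ 2) * W) *
          (8 * z - 16 * z ^ 3) * (8 * z - 16 * z ^ 3)
        + D * (8 - 48 * z ^ 2)
        + (2 * (α + β + 1 / 2) - 1) / z * (D * (8 * z - 16 * z ^ 3))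
        + (α + β + 1 / 2) / (z - 1) * (D * (8 * z - 16 * z ^ 3))
        + (α + β + 1 / 2) / (z + 1) * (D * (8 * z - 16 * z ^ 3))
        + 16 * α * β / ((z - 1) * (z + 1)) * W
      = (-((α + β + 1 / 2 - (α + β + 1) * (4 * z ^ 2 - 4 * z ^ 4)) /
            (4 * z ^ 2 * ((1 - z) * (1 + z)) * (2 * z ^ 2 - 1) ^ 2) *
            ((8 * z - 16 * z ^ 3) * (8 * z - 16 * z ^ 3)))
          + (8 - 48 * z ^ 2)
          + (2 * (α + β + 1 / 2) - 1) / z * (8 * z - 16 * z ^ 3)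
          + (α + β + 1 / 2) / (z - 1) * (8 * z - 16 * z ^ 3)
          + (α + β + 1 / 2) / (z + 1) * (8 * z - 16 * z ^ 3)) * D
        + (α * β / (4 * z ^ 2 * ((1 - z) * (1 + z)) * (2 * z ^ 2 - 1) ^ 2) *
            ((8 * z - 16 * z ^ 3) * (8 * z - 16 * z ^ 3))
          + 16 * α * β / ((z - 1) * (z + 1))) * W := by
    rw [div_neg]
    ring
  rw [show ((2 * (α + β + 1 / 2) - 1) / z + (α + β + 1 / 2) / (z - 1)
      + (α + β + 1 / 2) / (z + 1)) * (D * (8 * z - 16 * z ^ 3))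
      = (2 * (α + β + 1 / 2) - 1) / z * (D * (8 * z - 16 * z ^ 3))
        + (α + β + 1 / 2) / (z - 1) * (D * (8 * z - 16 * z ^ 3))
        + (α + β + 1 / 2) / (z + 1) * (D * (8 * z - 16 * z ^ 3)) by ring,
    ← add_assoc, ← add_assoc]
  rw [split]
  have hC1 : (-((α + β + 1 / 2 - (α + β + 1) * (4 * z ^ 2 - 4 * z ^ 4)) /
            (4 * z ^ 2 * ((1 - z) * (1 + z)) * (2 * z ^ 2 - 1) ^ 2) *
            ((8 * z - 16 * z ^ 3) * (8 * z - 16 * z ^ 3)))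
          + (8 - 48 * z ^ 2)
          + (2 * (α + β + 1 / 2) - 1) / z * (8 * z - 16 * z ^ 3)
          + (α + β + 1 / 2) / (z - 1) * (8 * z - 16 * z ^ 3)
          + (α + β + 1 / 2) / (z + 1) * (8 * z - 16 * z ^ 3) : ℂ) = 0 := by
    rw [div_mul_eq_mul_div, div_mul_eq_mul_div, div_mul_eq_mul_div, div_mul_eq_mul_div]
    field_simp
    ring
  have hC2 : (α * β / (4 * z ^ 2 * ((1 - z) * (1 + z)) * (2 * z ^ 2 - 1) ^ 2) *
            ((8 * z - 16 * z ^ 3) * (8 * z - 16 * z ^ 3))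
          + 16 * α * β / ((z - 1) * (z + 1)) : ℂ) = 0 := by
    rw [div_mul_eq_mul_div]
    rw [div_add_div _ _ hden (mul_ne_zero hz1 hz1'), div_eq_zero_iff]
    left
    ring
  rw [hC1, hC2]
  ring
end
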